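/- arXiv:0705.3918 — 3 statements merged into one kernel-verified Lean document; each statement's English description precedes it below -/
import Mathlib

section
/- Let Φ = (A; {E_i}; A*; {E*_i}) be a Leonard system in A. Then there exists a unique antiautomorphism † of A such that A† = A and (A*)† = A*. -/
open Matrix Polynomial
open Fin.NatCast

/-- A Leonard system in the matrix algebra `Mat_{d+1}(K)`: multiplicity-free
elements `A`, `Astar` with orderings `E`, `Estar` of their primitive idempotents
satisfying the irreducible-tridiagonality conditions. -/
structure LeonardSystem (K : Type*) [Field K] (d : ℕ) where
  A : Matrix (Fin (d+1)) (Fin (d+1)) K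
  Astar : Matrix (Fin (d+1)) (Fin (d+1)) K
  E : Fin (d+1) → Matrix (Fin (d+1)) (Fin (d+1)) K
  Estar : Fin (d+1) → Matrix (Fin (d+1)) (Fin (d+1)) K
  θ : Fin (d+1) → K
  θs : Fin (d+1) → K
  θ_inj : Function.Injective θ
  θs_inj : Function.Injective θs
  E_ne : ∀ i, E i ≠ 0
  Es_ne : ∀ i, Estar i ≠ 0
  E_mul : ∀ i j, E i * E j = if i = j then E i else 0
  Es_mul : ∀ i j, Estar i * Estar j = if i = j then Estar i else 0
  E_sum : ∑ i, E i = 1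
  Es_sum : ∑ i, Estar i = 1
  A_eq : A = ∑ i, θ i • E i
  As_eq : Astar = ∑ i, θs i • Estar i
  trid0 : ∀ i j : Fin (d+1), ((i : ℤ) - (j : ℤ)).natAbs > 1 → E i * Astar * E j = 0
  trid1 : ∀ i j : Fin (d+1), ((i : ℤ) - (j : ℤ)).natAbs = 1 → E i * Astar * E j ≠ 0
  strid0 : ∀ i j : Fin (d+1), ((i : ℤ) - (j : ℤ)).natAbs > 1 → Estar i * A * Estar j = 0
  strid1 : ∀ i j : Fin (d+1), ((i : ℤ) - (j : ℤ)).natAbs = 1 → Estar i * A * Estar j ≠ 0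

namespace LeonardSystem

variable {K : Type*} [Field K] {d : ℕ}

/-- Eigenvalues indexed by `ℕ` (junk value outside range). -/
def θN (L : LeonardSystem K d) (i : ℕ) : K := if h : i < d + 1 then L.θ ⟨i, h⟩ else 0

def θsN (L : LeonardSystem K d) (i : ℕ) : K := if h : i < d + 1 then L.θs ⟨i, h⟩ else 0

/-- `τ_i(A) = (A-θ₀)(A-θ₁)⋯(A-θ_{i-1})`. -/
def tauA (L : LeonardSystem K d) : ℕ → Matrix (Fin (d+1)) (Fin (d+1)) K
  | 0 => 1
  | i + 1 => L.tauA i * (L.A - L.θN i • 1)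

/-- `η_i(A) = (A-θ_d)(A-θ_{d-1})⋯(A-θ_{d-i+1})`. -/
def etaA (L : LeonardSystem K d) : ℕ → Matrix (Fin (d+1)) (Fin (d+1)) K
  | 0 => 1
  | i + 1 => L.etaA i * (L.A - L.θN (d - i) • 1)

/-- `τ*_i(A*)`. -/
def tausA (L : LeonardSystem K d) : ℕ → Matrix (Fin (d+1)) (Fin (d+1)) K
  | 0 => 1
  | i + 1 => L.tausA i * (L.Astar - L.θsN i • 1)

/-- `η*_i(A*)`. -/
def etasA (L : LeonardSystem K d) : ℕ → Matrix (Fin (d+1)) (Fin (d+1)) K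
  | 0 => 1
  | i + 1 => L.etasA i * (L.Astar - L.θsN (d - i) • 1)

/-- Scalar `τ_i(x)`. -/
def tauS (L : LeonardSystem K d) (i : ℕ) (x : K) : K := ∏ j ∈ Finset.range i, (x - L.θN j)

/-- Scalar `η_i(x)`. -/
def etaS (L : LeonardSystem K d) (i : ℕ) (x : K) : K := ∏ j ∈ Finset.range i, (x - L.θN (d - j))

/-- Scalar `τ*_i(x)`. -/
def tausS (L : LeonardSystem K d) (i : ℕ) (x : K) : K := ∏ j ∈ Finset.range i, (x - L.θsN j)

/-- Scalar `η*_i(x)`. -/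
def etasS (L : LeonardSystem K d) (i : ℕ) (x : K) : K := ∏ j ∈ Finset.range i, (x - L.θsN (d - j))

/-- First split sequence `φ_i`. -/
noncomputable def varphi (L : LeonardSystem K d) (i : ℕ) : K :=
  (L.θsN 0 - L.θsN i) * (L.tauA i * L.Estar 0).trace / (L.tauA (i-1) * L.Estar 0).trace

/-- Second split sequence `ϕ_i`. -/
noncomputable def phi (L : LeonardSystem K d) (i : ℕ) : K :=
  (L.θsN 0 - L.θsN i) * (L.etaA i * L.Estar 0).trace / (L.etaA (i-1) * L.Estar 0).trace

/-- `φ₁φ₂⋯φ_r`. -/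
noncomputable def varphiProd (L : LeonardSystem K d) (r : ℕ) : K :=
  ∏ j ∈ Finset.range r, L.varphi (j + 1)

/-- `ϕ₁ϕ₂⋯ϕ_r`. -/
noncomputable def phiProd (L : LeonardSystem K d) (r : ℕ) : K :=
  ∏ j ∈ Finset.range r, L.phi (j + 1)

/-- `φ_d φ_{d-1} ⋯ φ_{d-r+1}`. -/
noncomputable def varphiRevProd (L : LeonardSystem K d) (r : ℕ) : K :=
  ∏ j ∈ Finset.range r, L.varphi (d - j)

/-- `ϕ_d ϕ_{d-1} ⋯ ϕ_{d-r+1}`. -/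
noncomputable def phiRevProd (L : LeonardSystem K d) (r : ℕ) : K :=
  ∏ j ∈ Finset.range r, L.phi (d - j)

end LeonardSystem

section LSaux
variable {K : Type*} [Field K] {n : ℕ}

variable {K : Type*} [Field K] {n : ℕ}

lemma LSaux_sandwich (X : Matrix (Fin n) (Fin n) K) (i j : Fin n) :
    Matrix.single i i (1:K) * X * Matrix.single j j 1 = X i j • Matrix.single i j 1 := by
  ext a b
  rw [mul_assoc]
  by_cases ha : a = i <;> by_cases hb : b = j <;>
    simp [ha, hb, Matrix.smul_apply, Matrix.single_mul_apply_same,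
      Matrix.single_mul_apply_of_ne, Ne.symm]

lemma LSaux_sum_smul_std (f : Fin n → K) :
    ∑ i, f i • Matrix.single i i (1:K) = diagonal f := by
  ext a b
  simp only [Matrix.sum_apply, Matrix.smul_apply]
  by_cases h : a = b
  · subst h; simp [Matrix.single, diagonal, Finset.sum_ite_eq]
  · rw [Finset.sum_eq_zero, Matrix.diagonal_apply_ne _ h]
    intro x _
    rcases eq_or_ne x a with rfl | hx
    · simp [Matrix.single, h]
    · simp [Matrix.single, hx]

lemma LSaux_diag_indicator (c : K) (i : Fin n) :
    diagonal (fun k => if k = i then c else 0) = c • Matrix.single i i (1:K) := by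
  ext a b
  by_cases ha : a = i <;> by_cases hb : b = a <;>
    simp_all [diagonal, Matrix.smul_apply, Ne.symm, eq_comm]

lemma LSaux_smul_one (c : K) :
    c • (1 : Matrix (Fin n) (Fin n) K) = diagonal (fun _ => c) := by
  ext a b
  by_cases h : a = b <;> simp [h, Matrix.one_apply, Matrix.smul_apply]

lemma LSaux_fix_all (θs : Fin n → K) (hθ : Function.Injective θs)
    (B : Matrix (Fin n) (Fin n) K)
    (hB1 : ∀ i j : Fin n, ((i : ℤ) - (j : ℤ)).natAbs = 1 → B i j ≠ 0)
    (g : Matrix (Fin n) (Fin n) K → Matrix (Fin n) (Fin n) K)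
    (hadd : ∀ X Y, g (X + Y) = g X + g Y)
    (hmul : ∀ X Y, g (X * Y) = g X * g Y)
    (hone : g 1 = 1)
    (hsmul : ∀ (a : K) X, g (a • X) = a • g X)
    (hD : g (diagonal θs) = diagonal θs) (hB : g B = B) :
    ∀ X, g X = X := by
  have hzero : g 0 = 0 := by
    have h := hsmul 0 0; simpa using h
  have hsub : ∀ X Y, g (X - Y) = g X - g Y := by
    intro X Y
    have h : g (X - Y) + g Y = g X := by rw [← hadd, sub_add_cancel]
    exact eq_sub_of_add_eq h
  let G : Matrix (Fin n) (Fin n) K →* Matrix (Fin n) (Fin n) K :=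
    { toFun := g, map_one' := hone, map_mul' := hmul }
  let Ga : Matrix (Fin n) (Fin n) K →+ Matrix (Fin n) (Fin n) K :=
    AddMonoidHom.mk' g hadd
  have glprod : ∀ l : List (Matrix (Fin n) (Fin n) K), g l.prod = (l.map g).prod :=
    fun l => map_list_prod G l
  have gsum : ∀ (s : Finset (Fin n)) (f : Fin n → Matrix (Fin n) (Fin n) K),
      g (∑ x ∈ s, f x) = ∑ x ∈ s, g (f x) := fun s f => map_sum Ga f s
  -- list product of diagonals
  have ldiag : ∀ l : List (Fin n),
      (l.map (fun j => diagonal (fun k => θs k - θs j))).prod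
        = diagonal (fun k => (l.map (fun j => θs k - θs j)).prod) := by
    intro l
    induction l with
    | nil => simp [Matrix.diagonal_one]
    | cons a t ih =>
      simp only [List.map_cons, List.prod_cons, ih, Matrix.diagonal_mul_diagonal]
  -- Step 1: g fixes each diagonal matrix unit
  have hEii : ∀ i, g (Matrix.single i i (1:K)) = Matrix.single i i 1 := by
    intro i
    set c : K := ∏ j ∈ Finset.univ.erase i, (θs i - θs j) with hc
    have hcne : c ≠ 0 := by
      rw [hc]
      refine Finset.prod_ne_zero_iff.mpr (fun j hj => sub_ne_zero.mpr ?_)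
      intro h
      exact Finset.ne_of_mem_erase hj (hθ h.symm)
    have hfac : ∀ j : Fin n, diagonal θs - θs j • (1 : Matrix (Fin n) (Fin n) K)
        = diagonal (fun k => θs k - θs j) := by
      intro j; rw [LSaux_smul_one, Matrix.diagonal_sub]
    set l : List (Fin n) := (Finset.univ.erase i).toList with hl
    have hfprod : ∀ k : Fin n, (l.map (fun j => θs k - θs j)).prod
        = ∏ j ∈ Finset.univ.erase i, (θs k - θs j) := fun k =>
      Finset.prod_map_toList _ _
    have hind : (fun k => ∏ j ∈ Finset.univ.erase i, (θs k - θs j))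
        = fun k => if k = i then c else 0 := by
      funext k
      by_cases h : k = i
      · subst h; simp [hc]
      · rw [if_neg h]
        exact Finset.prod_eq_zero (Finset.mem_erase.mpr ⟨h, Finset.mem_univ k⟩) (sub_self _)
    have key : (l.map (fun j => diagonal θs - θs j • (1 : Matrix (Fin n) (Fin n) K))).prod
        = c • Matrix.single i i 1 := by
      have : (l.map (fun j => diagonal θs - θs j • (1 : Matrix (Fin n) (Fin n) K)))
          = l.map (fun j => diagonal (fun k => θs k - θs j)) := by
        exact List.map_congr_left (fun j _ => hfac j)
      rw [this, ldiag]
      have : (fun k => ((l.map fun j => θs k - θs j)).prod)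
          = fun k => if k = i then c else 0 := by
        funext k; rw [hfprod k]; exact congrFun hind k
      rw [this, LSaux_diag_indicator]
    have hgkey : g ((l.map (fun j => diagonal θs - θs j • (1 : Matrix (Fin n) (Fin n) K))).prod)
        = (l.map (fun j => diagonal θs - θs j • (1 : Matrix (Fin n) (Fin n) K))).prod := by
      rw [glprod, List.map_map]
      congr 1
      refine List.map_congr_left (fun j _ => ?_)
      show g _ = _
      rw [hsub, hD, hsmul, hone]
    rw [key, hsmul] at hgkey
    exact smul_right_injective _ hcne hgkey
  -- Step 2: adjacent matrix units
  have hadj : ∀ i j : Fin n, ((i : ℤ) - (j : ℤ)).natAbs = 1 →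
      g (Matrix.single i j (1:K)) = Matrix.single i j 1 := by
    intro i j hij
    have h1 := LSaux_sandwich B i j
    have h2 : g (Matrix.single i i (1:K) * B * Matrix.single j j 1)
        = Matrix.single i i (1:K) * B * Matrix.single j j 1 := by
      rw [hmul, hmul, hEii, hEii, hB]
    rw [h1, hsmul] at h2
    exact smul_right_injective _ (hB1 i j hij) h2
  -- Step 3: all matrix units, upward chains
  have hup : ∀ k : ℕ, ∀ i j : Fin n, (j : ℕ) = (i : ℕ) + k →
      g (Matrix.single i j (1:K)) = Matrix.single i j 1 := by
    intro k
    induction k with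
    | zero =>
      intro i j h
      have : i = j := Fin.ext (by omega)
      subst this
      exact hEii i
    | succ k ih =>
      intro i j h
      have hm : (i : ℕ) + k < n := by have := j.isLt; omega
      set m : Fin n := ⟨(i : ℕ) + k, hm⟩ with hmdef
      have h1 : Matrix.single i j (1:K) = Matrix.single i m 1 * Matrix.single m j 1 := by
        rw [Matrix.single_mul_single_same, one_mul]
      rw [h1, hmul, ih i m rfl, hadj m j (by simp only [hmdef]; omega), ← h1]
  have hdown : ∀ k : ℕ, ∀ i j : Fin n, (i : ℕ) = (j : ℕ) + k →
      g (Matrix.single i j (1:K)) = Matrix.single i j 1 := by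
    intro k
    induction k with
    | zero =>
      intro i j h
      have : i = j := Fin.ext (by omega)
      subst this
      exact hEii i
    | succ k ih =>
      intro i j h
      have hm : (j : ℕ) + k < n := by have := i.isLt; omega
      set m : Fin n := ⟨(j : ℕ) + k, hm⟩ with hmdef
      have h1 : Matrix.single i j (1:K) = Matrix.single i m 1 * Matrix.single m j 1 := by
        rw [Matrix.single_mul_single_same, one_mul]
      rw [h1, hmul, ih m j rfl, hadj i m (by simp only [hmdef]; omega), ← h1]
  have hall : ∀ i j : Fin n, g (Matrix.single i j (1:K)) = Matrix.single i j 1 := by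
    intro i j
    rcases le_total (i : ℕ) (j : ℕ) with h | h
    · exact hup ((j : ℕ) - (i : ℕ)) i j (by omega)
    · exact hdown ((i : ℕ) - (j : ℕ)) i j (by omega)
  -- Conclude
  intro X
  have hX := Matrix.matrix_eq_sum_single X
  calc g X = g (∑ i, ∑ j, Matrix.single i j (X i j)) := by rw [← hX]
    _ = ∑ i, ∑ j, g (Matrix.single i j (X i j)) := by
        rw [gsum]
        exact Finset.sum_congr rfl (fun i _ => gsum _ _)
    _ = ∑ i, ∑ j, Matrix.single i j (X i j) := by
        refine Finset.sum_congr rfl (fun i _ => Finset.sum_congr rfl (fun j _ => ?_))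
        have : Matrix.single i j (X i j) = X i j • Matrix.single i j (1:K) := by
          rw [Matrix.smul_single, smul_eq_mul, mul_one]
        rw [this, hsmul, hall]
    _ = X := hX.symm

lemma LSaux_conj (E : Fin n → Matrix (Fin n) (Fin n) K)
    (hne : ∀ i, E i ≠ 0)
    (hmul : ∀ i j, E i * E j = if i = j then E i else 0) :
    ∃ P Q : Matrix (Fin n) (Fin n) K, P * Q = 1 ∧ Q * P = 1 ∧
      ∀ i, Q * (E i) * P = Matrix.single i i 1 := by
  classical
  have hcol : ∀ i, ∃ p : Fin n × Fin n, E i p.1 p.2 ≠ 0 := by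
    intro i
    by_contra h
    push_neg at h
    exact hne i (by ext a b; simpa using h (a, b))
  choose p hp using hcol
  set P : Matrix (Fin n) (Fin n) K := Matrix.of (fun r i => E i r (p i).2) with hPdef
  have hEP : ∀ i, E i * P = P * Matrix.single i i 1 := by
    intro i
    ext a b
    have h1 : (E i * P) a b = (E i * E b) a ((p b).2) := by
      simp [Matrix.mul_apply, hPdef]
    rw [h1, hmul i b]
    by_cases h : b = i
    · subst h
      simp [hPdef]
    · rw [if_neg (Ne.symm h)]
      simp [h, hPdef]
  have hdet : P.det ≠ 0 := by
    intro hd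
    obtain ⟨v, hv0, hv⟩ := (Matrix.exists_mulVec_eq_zero_iff).mpr hd
    obtain ⟨j, hj⟩ : ∃ j, v j ≠ 0 := by
      by_contra h; push_neg at h; exact hv0 (funext h)
    have h1 : (E j * P) *ᵥ v = 0 := by
      rw [← Matrix.mulVec_mulVec, hv, Matrix.mulVec_zero]
    rw [hEP j, ← Matrix.mulVec_mulVec, Matrix.single_mulVec] at h1
    have h2 := congrFun h1 ((p j).1)
    have h3 : (P *ᵥ Function.update (0 : Fin n → K) j (1 * v j)) ((p j).1)
        = P ((p j).1) j * v j := by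
      simp [Matrix.mulVec, dotProduct, Function.update, Finset.sum_ite_eq,
        eq_comm]
    rw [h3] at h2
    have : P ((p j).1) j = E j ((p j).1) ((p j).2) := rfl
    rw [this] at h2
    exact hp j (by
      rcases mul_eq_zero.mp h2 with h | h
      · exact h
      · exact absurd h hj)
  have hu : IsUnit P.det := isUnit_iff_ne_zero.mpr hdet
  refine ⟨P, P⁻¹, Matrix.mul_nonsing_inv P hu, Matrix.nonsing_inv_mul P hu, ?_⟩
  intro i
  rw [mul_assoc, hEP i, ← mul_assoc, Matrix.nonsing_inv_mul P hu, one_mul]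

end LSaux

/-- There is a unique antiautomorphism `†` of the matrix algebra fixing both
`A` and `A*` of a Leonard system. -/
theorem LeonardSystem.exists_unique_antiautomorphism {K : Type*} [Field K] {d : ℕ}
    (L : LeonardSystem K d) :
    ∃! σ : (Matrix (Fin (d+1)) (Fin (d+1)) K) →ₗ[K] Matrix (Fin (d+1)) (Fin (d+1)) K,
      (∀ X Y, σ (X * Y) = σ Y * σ X) ∧ Function.Bijective σ ∧
      σ L.A = L.A ∧ σ L.Astar = L.Astar := by
  classical
  obtain ⟨P, Q, hPQ, hQP, hE⟩ := LSaux_conj L.Estar L.Es_ne L.Es_mul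
  set B : Matrix (Fin (d+1)) (Fin (d+1)) K := Q * L.A * P with hBdef
  have hPXQ : ∀ X : Matrix (Fin (d+1)) (Fin (d+1)) K, P * (Q * X * P) * Q = X := by
    intro X
    calc P * (Q * X * P) * Q = (P * Q) * X * (P * Q) := by noncomm_ring
    _ = X := by rw [hPQ, one_mul, mul_one]
  have hr : ∀ X Y : Matrix (Fin (d+1)) (Fin (d+1)) K,
      (Q * X * P) * (Q * Y * P) = Q * (X * Y) * P := by
    intro X Y
    calc (Q * X * P) * (Q * Y * P) = Q * (X * ((P * Q) * Y)) * P := by noncomm_ring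
    _ = _ := by rw [hPQ, one_mul, ← mul_assoc]
  have hr' : ∀ X Y : Matrix (Fin (d+1)) (Fin (d+1)) K,
      (P * X * Q) * (P * Y * Q) = P * (X * Y) * Q := by
    intro X Y
    calc (P * X * Q) * (P * Y * Q) = P * (X * ((Q * P) * Y)) * Q := by noncomm_ring
    _ = _ := by rw [hQP, one_mul, ← mul_assoc]
  have hDdiag : Q * L.Astar * P = diagonal L.θs := by
    rw [L.As_eq, Matrix.mul_sum, Matrix.sum_mul]
    simp only [mul_smul_comm, smul_mul_assoc, hE]
    exact LSaux_sum_smul_std L.θs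
  have hBE : ∀ i j, Q * (L.Estar i * L.A * L.Estar j) * P
      = B i j • Matrix.single i j 1 := by
    intro i j
    have h1 : L.Estar i * L.A * L.Estar j = L.Estar i * (L.A * L.Estar j) := by
      rw [mul_assoc]
    rw [h1, ← hr, ← hr, hE, hE, ← hBdef, ← mul_assoc]
    exact LSaux_sandwich B i j
  have hB0 : ∀ i j : Fin (d+1), ((i : ℤ) - (j : ℤ)).natAbs > 1 → B i j = 0 := by
    intro i j h
    have h2 := hBE i j
    rw [L.strid0 i j h] at h2
    have h3 := congrArg (fun M => M i j) h2
    simpa using h3.symm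
  have hB1 : ∀ i j : Fin (d+1), ((i : ℤ) - (j : ℤ)).natAbs = 1 → B i j ≠ 0 := by
    intro i j h hBij
    refine L.strid1 i j h (hPXQ (L.Estar i * L.A * L.Estar j) ▸ ?_)
    rw [hBE i j, hBij, zero_smul, Matrix.mul_zero, Matrix.zero_mul]
  -- the scaling sequence
  set c : ℕ → K := fun m => Nat.rec (motive := fun _ => K) 1
    (fun i prev => prev * B (↑(i+1)) (↑i) / B (↑i) (↑(i+1))) m with hcdef
  have hc0 : c 0 = 1 := rfl
  have hcs : ∀ m, c (m+1) = c m * B (↑(m+1)) (↑m) / B (↑m) (↑(m+1)) := fun m => rfl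
  have hval : ∀ m, m < d + 1 → ((m : Fin (d+1)) : ℕ) = m := by
    intro m h
    rw [Fin.val_natCast]
    exact Nat.mod_eq_of_lt h
  have hadjBne : ∀ m, m < d → B (↑(m+1)) (↑m) ≠ 0 ∧ B (↑m) (↑(m+1)) ≠ 0 := by
    intro m hm
    have h1 : ((↑(m+1) : Fin (d+1)) : ℕ) = m + 1 := hval _ (by omega)
    have h2 : ((↑m : Fin (d+1)) : ℕ) = m := hval _ (by omega)
    constructor
    · exact hB1 _ _ (by rw [h1, h2]; omega)
    · exact hB1 _ _ (by rw [h1, h2]; omega)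
  have hcne : ∀ m, m ≤ d → c m ≠ 0 := by
    intro m
    induction m with
    | zero => intro _; rw [hc0]; exact one_ne_zero
    | succ m ih =>
      intro hm
      rw [hcs]
      obtain ⟨hx, hy⟩ := hadjBne m (by omega)
      exact div_ne_zero (mul_ne_zero (ih (by omega)) hx) hy
  set C : Matrix (Fin (d+1)) (Fin (d+1)) K := diagonal (fun i => c i.val) with hCdef
  set C' : Matrix (Fin (d+1)) (Fin (d+1)) K := diagonal (fun i => (c i.val)⁻¹) with hC'def
  have hcine : ∀ i : Fin (d+1), c i.val ≠ 0 := fun i => hcne i.val (by omega)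
  have hCC' : C * C' = 1 := by
    rw [hCdef, hC'def, Matrix.diagonal_mul_diagonal,
      show (fun i : Fin (d+1) => c i.val * (c i.val)⁻¹) = fun _ => (1:K) from
        funext fun i => mul_inv_cancel₀ (hcine i), Matrix.diagonal_one]
  have hC'C : C' * C = 1 := by
    rw [hC'def, hCdef, Matrix.diagonal_mul_diagonal,
      show (fun i : Fin (d+1) => (c i.val)⁻¹ * c i.val) = fun _ => (1:K) from
        funext fun i => inv_mul_cancel₀ (hcine i), Matrix.diagonal_one]
  have hCT : Cᵀ = C := Matrix.diagonal_transpose _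
  have hC'T : C'ᵀ = C' := Matrix.diagonal_transpose _
  -- key symmetry: C Bᵀ C' = B
  have hCBC : C * Bᵀ * C' = B := by
    ext i j
    rw [hCdef, hC'def, Matrix.mul_diagonal, Matrix.diagonal_mul, Matrix.transpose_apply]
    rcases lt_trichotomy (i : ℕ) (j : ℕ) with h | h | h
    · by_cases h2 : (j : ℕ) = (i : ℕ) + 1
      · have e1 : (((i : ℕ) : Fin (d+1))) = i := Fin.cast_val_eq_self i
        have e2 : ((((i : ℕ) + 1 : ℕ)) : Fin (d+1)) = j := by
          apply Fin.ext
          rw [hval _ (by omega)]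
          omega
        have hrec := hcs (i : ℕ)
        rw [e1, e2] at hrec
        have hcj : c (j : ℕ) = c (i : ℕ) * B j i / B i j := by rw [h2]; exact hrec
        have hxij : B i j ≠ 0 := hB1 i j (by omega)
        have key : c (i : ℕ) * B j i = B i j * c (j : ℕ) := by
          rw [hcj]
          field_simp
        rw [key, mul_assoc, mul_inv_cancel₀ (hcine j), mul_one]
      · rw [hB0 i j (by omega), hB0 j i (by omega), mul_zero, zero_mul]
    · have : i = j := Fin.ext h
      subst this
      rw [mul_comm (c (i : ℕ)) (B i i), mul_assoc, mul_inv_cancel₀ (hcine i), mul_one]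
    · by_cases h2 : (i : ℕ) = (j : ℕ) + 1
      · have e1 : (((j : ℕ) : Fin (d+1))) = j := Fin.cast_val_eq_self j
        have e2 : ((((j : ℕ) + 1 : ℕ)) : Fin (d+1)) = i := by
          apply Fin.ext
          rw [hval _ (by omega)]
          omega
        have hrec := hcs (j : ℕ)
        rw [e1, e2] at hrec
        have hci : c (i : ℕ) = c (j : ℕ) * B i j / B j i := by rw [h2]; exact hrec
        have hyij : B j i ≠ 0 := hB1 j i (by omega)
        rw [hci, div_mul_cancel₀ _ hyij, mul_comm (c (j : ℕ)) (B i j), mul_assoc,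
          mul_inv_cancel₀ (hcine j), mul_one]
      · rw [hB0 i j (by omega), hB0 j i (by omega), mul_zero, zero_mul]
  have hdd : ∀ f g : Fin (d+1) → K, diagonal f * diagonal g = diagonal g * diagonal f := by
    intro f g
    rw [Matrix.diagonal_mul_diagonal, Matrix.diagonal_mul_diagonal]
    exact congrArg Matrix.diagonal (funext fun i => mul_comm (f i) (g i))
  have hCDC' : C * diagonal L.θs * C' = diagonal L.θs := by
    rw [hCdef, hdd, ← hCdef, mul_assoc, hCC', mul_one]
  have hC'DC : C' * diagonal L.θs * C = diagonal L.θs := by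
    rw [hC'def, hdd, ← hC'def, mul_assoc, hC'C, mul_one]
  -- cancellation helpers
  have hQP1 : ∀ Z : Matrix (Fin (d+1)) (Fin (d+1)) K, Q * (P * Z) = Z := by
    intro Z; rw [← mul_assoc, hQP, one_mul]
  have hPQ1 : ∀ Z : Matrix (Fin (d+1)) (Fin (d+1)) K, P * (Q * Z) = Z := by
    intro Z; rw [← mul_assoc, hPQ, one_mul]
  have hCC1 : ∀ Z : Matrix (Fin (d+1)) (Fin (d+1)) K, C * (C' * Z) = Z := by
    intro Z; rw [← mul_assoc, hCC', one_mul]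
  have hC'C1 : ∀ Z : Matrix (Fin (d+1)) (Fin (d+1)) K, C' * (C * Z) = Z := by
    intro Z; rw [← mul_assoc, hC'C, one_mul]
  have hQPT : Qᵀ * Pᵀ = 1 := by rw [← Matrix.transpose_mul, hPQ, Matrix.transpose_one]
  have hPQT : Pᵀ * Qᵀ = 1 := by rw [← Matrix.transpose_mul, hQP, Matrix.transpose_one]
  have hQT : ∀ Z : Matrix (Fin (d+1)) (Fin (d+1)) K, Qᵀ * (Pᵀ * Z) = Z := by
    intro Z; rw [← mul_assoc, hQPT, one_mul]
  have hPT : ∀ Z : Matrix (Fin (d+1)) (Fin (d+1)) K, Pᵀ * (Qᵀ * Z) = Z := by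
    intro Z; rw [← mul_assoc, hPQT, one_mul]
  -- the antiautomorphism and its inverse
  set σf : Matrix (Fin (d+1)) (Fin (d+1)) K → Matrix (Fin (d+1)) (Fin (d+1)) K :=
    fun X => P * (C * (Q * X * P)ᵀ * C') * Q with hσf
  set τf : Matrix (Fin (d+1)) (Fin (d+1)) K → Matrix (Fin (d+1)) (Fin (d+1)) K :=
    fun Y => P * (C' * (Q * Y * P) * C)ᵀ * Q with hτf
  have hσadd : ∀ X Y, σf (X + Y) = σf X + σf Y := by
    intro X Y
    simp only [hσf, mul_add, add_mul, Matrix.transpose_add]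
  have hσsmul : ∀ (a : K) X, σf (a • X) = a • σf X := by
    intro a X
    simp only [hσf, mul_smul_comm, smul_mul_assoc, Matrix.transpose_smul]
  have hτadd : ∀ X Y, τf (X + Y) = τf X + τf Y := by
    intro X Y
    simp only [hτf, mul_add, add_mul, Matrix.transpose_add]
  have hτsmul : ∀ (a : K) X, τf (a • X) = a • τf X := by
    intro a X
    simp only [hτf, mul_smul_comm, smul_mul_assoc, Matrix.transpose_smul]
  have hσm : ∀ X Y, σf (X * Y) = σf Y * σf X := by
    intro X Y
    simp only [hσf, Matrix.transpose_mul, Matrix.transpose_transpose, hCT, hC'T, mul_assoc,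
      hQP1, hPQ1, hCC1, hC'C1, hQT, hPT, hPQ, hQP, hCC', hC'C, hQPT, hPQT, one_mul, mul_one]
  have hτm : ∀ X Y, τf (X * Y) = τf Y * τf X := by
    intro X Y
    simp only [hτf, Matrix.transpose_mul, Matrix.transpose_transpose, hCT, hC'T, mul_assoc,
      hQP1, hPQ1, hCC1, hC'C1, hQT, hPT, hPQ, hQP, hCC', hC'C, hQPT, hPQT, one_mul, mul_one]
  have hτσ : ∀ X, τf (σf X) = X := by
    intro X
    simp only [hσf, hτf, Matrix.transpose_mul, Matrix.transpose_transpose, hCT, hC'T, mul_assoc,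
      hQP1, hPQ1, hCC1, hC'C1, hQT, hPT, hPQ, hQP, hCC', hC'C, hQPT, hPQT, one_mul, mul_one]
  have hστ : ∀ Y, σf (τf Y) = Y := by
    intro Y
    simp only [hσf, hτf, Matrix.transpose_mul, Matrix.transpose_transpose, hCT, hC'T, mul_assoc,
      hQP1, hPQ1, hCC1, hC'C1, hQT, hPT, hPQ, hQP, hCC', hC'C, hQPT, hPQT, one_mul, mul_one]
  have hτ1 : τf 1 = 1 := by
    simp only [hτf, mul_one, Matrix.transpose_mul, Matrix.transpose_transpose,
      Matrix.transpose_one, hCT, hC'T,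
      mul_assoc, hQP1, hPQ1, hCC1, hC'C1, hQT, hPT, hPQ, hQP, hCC', hC'C, hQPT, hPQT, one_mul]
  have hσA : σf L.A = L.A := by
    simp only [hσf]
    rw [← hBdef, hCBC, hBdef]
    exact hPXQ L.A
  have hσAs : σf L.Astar = L.Astar := by
    simp only [hσf]
    rw [hDdiag, Matrix.diagonal_transpose, hCDC', ← hDdiag]
    exact hPXQ L.Astar
  have hτA : τf L.A = L.A := by
    simp only [hτf]
    rw [← hBdef, Matrix.transpose_mul, Matrix.transpose_mul, hCT, hC'T,
      ← mul_assoc C Bᵀ C', hCBC, hBdef]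
    exact hPXQ L.A
  have hτAs : τf L.Astar = L.Astar := by
    simp only [hτf]
    rw [hDdiag, hC'DC, Matrix.diagonal_transpose, ← hDdiag]
    exact hPXQ L.Astar
  refine ⟨{ toFun := σf, map_add' := hσadd, map_smul' := hσsmul }, ⟨hσm,
    ⟨Function.LeftInverse.injective hτσ, Function.RightInverse.surjective hστ⟩,
    hσA, hσAs⟩, ?_⟩
  -- uniqueness
  rintro σ ⟨hm, hbij, hA, hAs⟩
  have hσ1 : σ 1 = 1 := by
    obtain ⟨Z, hZ⟩ := hbij.2 1
    have h := hm Z 1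
    rw [mul_one, hZ, mul_one] at h
    exact h.symm
  set f : Matrix (Fin (d+1)) (Fin (d+1)) K → Matrix (Fin (d+1)) (Fin (d+1)) K :=
    fun X => τf (σ X) with hfdef
  have hfadd : ∀ X Y, f (X + Y) = f X + f Y := by
    intro X Y
    simp only [hfdef, map_add, hτadd]
  have hfsmul : ∀ (a : K) X, f (a • X) = a • f X := by
    intro a X
    simp only [hfdef]
    rw [σ.map_smul, hτsmul]
  have hfm : ∀ X Y, f (X * Y) = f X * f Y := by
    intro X Y
    simp only [hfdef]
    rw [hm X Y, hτm]
  have hf1 : f 1 = 1 := by simp only [hfdef, hσ1, hτ1]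
  have hfA : f L.A = L.A := by simp only [hfdef, hA, hτA]
  have hfAs : f L.Astar = L.Astar := by simp only [hfdef, hAs, hτAs]
  set g : Matrix (Fin (d+1)) (Fin (d+1)) K → Matrix (Fin (d+1)) (Fin (d+1)) K :=
    fun Y => Q * f (P * Y * Q) * P with hgdef
  have hgadd : ∀ X Y, g (X + Y) = g X + g Y := by
    intro X Y
    simp only [hgdef, mul_add, add_mul, hfadd]
  have hgsmul : ∀ (a : K) X, g (a • X) = a • g X := by
    intro a X
    simp only [hgdef, mul_smul_comm, smul_mul_assoc, hfsmul]
  have hgmul : ∀ X Y, g (X * Y) = g X * g Y := by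
    intro X Y
    simp only [hgdef]
    calc Q * f (P * (X * Y) * Q) * P
        = Q * f ((P * X * Q) * (P * Y * Q)) * P := by rw [hr' X Y]
      _ = Q * (f (P * X * Q) * f (P * Y * Q)) * P := by rw [hfm]
      _ = (Q * f (P * X * Q) * P) * (Q * f (P * Y * Q) * P) := (hr _ _).symm
  have hgone : g 1 = 1 := by
    simp only [hgdef, mul_one, hPQ, hf1, hQP]
  have hPDQ : P * diagonal L.θs * Q = L.Astar := by
    rw [← hDdiag]
    exact hPXQ L.Astar
  have hgD : g (diagonal L.θs) = diagonal L.θs := by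
    simp only [hgdef]
    rw [hPDQ, hfAs]
    exact hDdiag
  have hPBQ : P * B * Q = L.A := by
    rw [hBdef]
    exact hPXQ L.A
  have hgB : g B = B := by
    simp only [hgdef]
    rw [hPBQ, hfA, ← hBdef]
  have hgid := LSaux_fix_all L.θs L.θs_inj B hB1 g hgadd hgmul hgone hgsmul hgD hgB
  have hfid : ∀ X, f X = X := by
    intro X
    have h := hgid (Q * X * P)
    simp only [hgdef] at h
    rw [hPXQ X] at h
    calc f X = P * (Q * f X * P) * Q := (hPXQ _).symm
      _ = P * (Q * X * P) * Q := by rw [h]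
      _ = X := hPXQ X
  refine LinearMap.ext fun X => ?_
  have h1 : τf (σ X) = X := hfid X
  have h2 := congrArg σf h1
  rw [hστ] at h2
  exact h2
end

section
/- Let Φ = (A; {E_i}; A*; {E*_i}) be a Leonard system with parameter array ({θ_i}; {θ*_i}; {φ_i}; {ϕ_i}). Then for 0 ≤ i,j ≤ d, E_0 τ*_i(A*) τ_j(A) E*_0 = δ_{ij} φ_1 φ_2 ⋯ φ_i E_0 E*_0. -/
set_option linter.unusedSectionVars false
set_option maxHeartbeats 1000000

open Matrix Polynomial Module

section Helpers

variable {K : Type*} [Field K] {n : Type*} [Fintype n] [DecidableEq n]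

lemma vmv_mulVec (a b v : n → K) : vecMulVec a b *ᵥ v = (b ⬝ᵥ v) • a := by
  ext i
  simp [vecMulVec_apply, mulVec, dotProduct, Finset.sum_mul, Finset.mul_sum, mul_comm, mul_assoc,
    mul_left_comm]

lemma vecMul_vmv (a b v : n → K) : v ᵥ* vecMulVec a b = (v ⬝ᵥ a) • b := by
  ext j
  simp [vecMulVec_apply, vecMul, dotProduct, Finset.mul_sum, Finset.sum_mul, mul_comm, mul_assoc, mul_left_comm]

lemma mul_vmv (M : Matrix n n K) (a b : n → K) : M * vecMulVec a b = vecMulVec (M *ᵥ a) b := by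
  ext i j
  simp [vecMulVec_apply, Matrix.mul_apply, mulVec, dotProduct, Finset.sum_mul, mul_assoc]

lemma vmv_mul (a b : n → K) (M : Matrix n n K) : vecMulVec a b * M = vecMulVec a (b ᵥ* M) := by
  ext i j
  simp [vecMulVec_apply, Matrix.mul_apply, vecMul, dotProduct, Finset.mul_sum, mul_assoc,
    mul_left_comm, mul_comm]

lemma vmv_mul_vmv (a b c e : n → K) :
    vecMulVec a b * vecMulVec c e = (b ⬝ᵥ c) • vecMulVec a e := by
  rw [vmv_mul, vecMul_vmv]
  ext i j
  simp [vecMulVec_apply, mul_comm, mul_assoc, mul_left_comm]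

lemma vmv_ne_zero {a b : n → K} (ha : a ≠ 0) (hb : b ≠ 0) : vecMulVec a b ≠ 0 := by
  obtain ⟨i, hi⟩ := Function.ne_iff.mp ha
  obtain ⟨j, hj⟩ := Function.ne_iff.mp hb
  intro h
  have := congrFun (congrFun h i) j
  simp [vecMulVec_apply] at this
  tauto

lemma trace_mul_vmv (M : Matrix n n K) (a b : n → K) :
    (M * vecMulVec a b).trace = b ⬝ᵥ (M *ᵥ a) := by
  rw [mul_vmv]
  simp [Matrix.trace, Matrix.diag, vecMulVec_apply, dotProduct, mul_comm]


lemma matrix_ne_zero_of_rank {P : Matrix n n K} (h : P.rank ≠ 0) : P ≠ 0 := by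
  intro h0; subst h0; simp [Matrix.rank_zero] at h

lemma rank_pos_of_ne_zero {P : Matrix n n K} (h : P ≠ 0) : 1 ≤ P.rank := by
  rcases Nat.eq_zero_or_pos P.rank with h0 | h1
  · exfalso
    apply h
    have hr : LinearMap.range P.mulVecLin = ⊥ := Submodule.finrank_eq_zero.mp h0
    ext i j
    have : P.mulVecLin (Pi.single j 1) = 0 := by
      have : P.mulVecLin (Pi.single j 1) ∈ LinearMap.range P.mulVecLin := ⟨_, rfl⟩
      rw [hr] at this; simpa using this
    have := congrFun this i
    simpa [Matrix.mulVecLin_apply, Matrix.mulVec_single] using this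
  · exact h1

lemma range_le_of_left_factor {P Q R : Matrix n n K} (h : P * Q = R) :
    LinearMap.range R.mulVecLin ≤ LinearMap.range P.mulVecLin := by
  rw [← h, Matrix.mulVecLin_mul]
  exact LinearMap.range_comp_le_range _ _

/-- For orthogonal nonzero idempotents summing to a matrix of full size,
each partial sum has rank at least the cardinality. -/
lemma rank_sum_ge {m : ℕ} (P : Fin m → Matrix n n K)
    (horth : ∀ i j, P i * P j = if i = j then P i else 0) :
    ∀ s : Finset (Fin m), ∑ i ∈ s, (P i).rank ≤ (∑ i ∈ s, P i).rank := by
  intro s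
  induction s using Finset.induction_on with
  | empty => simp
  | @insert k s hk ih =>
    rw [Finset.sum_insert hk, Finset.sum_insert hk]
    set Q := ∑ i ∈ s, P i with hQ
    have hPP : P k * P k = P k := by simpa using horth k k
    have hPQ : P k * Q = 0 := by
      rw [hQ, Finset.mul_sum]
      apply Finset.sum_eq_zero
      intro j hj
      have : k ≠ j := fun h => hk (h ▸ hj)
      simpa [this] using horth k j
    have hQP : Q * P k = 0 := by
      rw [hQ, Finset.sum_mul]
      apply Finset.sum_eq_zero
      intro j hj
      have : j ≠ k := fun h => hk (h ▸ hj)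
      simpa [this] using horth j k
    have hQQ : Q * Q = Q := by
      have hrow : ∀ j ∈ s, P j * Q = P j := by
        intro j hj
        rw [hQ, Finset.mul_sum]
        rw [Finset.sum_eq_single_of_mem j hj
          (fun b hb hbj => by simpa [Ne.symm hbj] using horth j b)]
        simpa using horth j j
      calc Q * Q = ∑ j ∈ s, P j * Q := by rw [hQ, Finset.sum_mul]
        _ = ∑ j ∈ s, P j := Finset.sum_congr rfl hrow
        _ = Q := hQ.symm
    -- ranges
    have h1 : LinearMap.range (P k).mulVecLin ≤ LinearMap.range (P k + Q).mulVecLin := by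
      apply range_le_of_left_factor (Q := P k)
      rw [add_mul, hPP, hQP, add_zero]
    have h2 : LinearMap.range Q.mulVecLin ≤ LinearMap.range (P k + Q).mulVecLin := by
      apply range_le_of_left_factor (Q := Q)
      rw [add_mul, hPQ, hQQ, zero_add]
    have hdisj : LinearMap.range (P k).mulVecLin ⊓ LinearMap.range Q.mulVecLin = ⊥ := by
      rw [eq_bot_iff]
      rintro v ⟨⟨a, ha⟩, ⟨b, hb⟩⟩
      have hv1 : P k *ᵥ v = v := by
        rw [← ha]; simp only [Matrix.mulVecLin_apply]
        rw [Matrix.mulVec_mulVec, hPP]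
      have hv2 : Q *ᵥ v = v := by
        rw [← hb]; simp only [Matrix.mulVecLin_apply]
        rw [Matrix.mulVec_mulVec, hQQ]
      have : v = 0 := by
        conv_lhs => rw [← hv1, ← hv2]
        rw [Matrix.mulVec_mulVec, hPQ, Matrix.zero_mulVec]
      simp [this]
    have hsup : (P k).rank + Q.rank =
        finrank K ↥(LinearMap.range (P k).mulVecLin ⊔ LinearMap.range Q.mulVecLin) := by
      have := Submodule.finrank_sup_add_finrank_inf_eq
        (LinearMap.range (P k).mulVecLin) (LinearMap.range Q.mulVecLin)
      rw [hdisj] at this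
      simpa [Matrix.rank] using this.symm
    calc (P k).rank + ∑ i ∈ s, (P i).rank ≤ (P k).rank + Q.rank := by
          exact Nat.add_le_add_left (ih) _
      _ = finrank K ↥(LinearMap.range (P k).mulVecLin ⊔ LinearMap.range Q.mulVecLin) := hsup
      _ ≤ (P k + Q).rank := Submodule.finrank_mono (sup_le h1 h2)
lemma rank_eq_one_of_partition {m : ℕ} (hcard : Fintype.card n = m) (P : Fin m → Matrix n n K)
    (hne : ∀ i, P i ≠ 0) (horth : ∀ i j, P i * P j = if i = j then P i else 0)
    (hsum : ∑ i, P i = 1) : ∀ i, (P i).rank = 1 := by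
  intro i
  have htot : ∑ j, (P j).rank ≤ m := by
    have := rank_sum_ge P horth Finset.univ
    rw [hsum] at this
    simpa [hcard] using this
  have h1 : ∀ j, 1 ≤ (P j).rank := fun j => rank_pos_of_ne_zero (hne j)
  have hsplit : (P i).rank + ∑ j ∈ Finset.univ.erase i, (P j).rank = ∑ j, (P j).rank :=
    Finset.add_sum_erase Finset.univ (fun j => (P j).rank) (Finset.mem_univ i)
  have herase : (m - 1) ≤ ∑ j ∈ Finset.univ.erase i, (P j).rank := by
    calc m - 1 = (Finset.univ.erase i).card := by
          rw [Finset.card_erase_of_mem (Finset.mem_univ i)]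
          simp [hcard, Fintype.card_fin]
      _ ≤ ∑ j ∈ Finset.univ.erase i, (P j).rank := by
          apply Finset.card_nsmul_le_sum (f := fun j => (P j).rank) _ 1 (fun j _ => h1 j)
            |>.trans_eq' (by simp)
  have hm : 1 ≤ m := by
    have := Fintype.card_pos_iff.mpr ⟨i⟩
    exact (by simpa using this : 0 < m)
  have := h1 i
  omega

lemma exists_rank_one_decomp {P : Matrix n n K} (hrank : P.rank = 1) (hidem : P * P = P) :
    ∃ a b : n → K, P = vecMulVec a b ∧ b ⬝ᵥ a = 1 := by
  have hP0 : P ≠ 0 := matrix_ne_zero_of_rank (by omega)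
  have hbot : LinearMap.range P.mulVecLin ≠ ⊥ := by
    intro h
    have : P.rank = 0 := by rw [Matrix.rank, h]; simp
    omega
  obtain ⟨v, hvmem, hv0⟩ := Submodule.ne_bot_iff _ |>.mp hbot
  have hle : (K ∙ v) ≤ LinearMap.range P.mulVecLin :=
    (Submodule.span_singleton_le_iff_mem _ _).mpr hvmem
  have heq : (K ∙ v) = LinearMap.range P.mulVecLin := by
    apply Submodule.eq_of_le_of_finrank_le hle
    rw [finrank_span_singleton hv0]
    exact le_of_eq hrank
  have hcol : ∀ j, ∃ c : K, c • v = P *ᵥ Pi.single j 1 := by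
    intro j
    have : P *ᵥ Pi.single j 1 ∈ LinearMap.range P.mulVecLin := ⟨Pi.single j 1, rfl⟩
    rw [← heq] at this
    exact Submodule.mem_span_singleton.mp this
  choose b hb using hcol
  have hPvb : P = vecMulVec v b := by
    ext i j
    have := congrFun (hb j) i
    simp only [Pi.smul_apply, smul_eq_mul] at this
    have h2 : (P *ᵥ Pi.single j 1) i = P i j := by simp [Matrix.mulVec_single]
    rw [vecMulVec_apply, mul_comm (v i) (b j), this, h2]
  refine ⟨v, b, hPvb, ?_⟩
  have : (b ⬝ᵥ v) • P = P := by
    conv_lhs => rw [hPvb]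
    rw [← vmv_mul_vmv, ← hPvb, hidem]
  have hz : (b ⬝ᵥ v - 1) • P = 0 := by
    rw [sub_smul, this, one_smul, sub_self]
  rcases smul_eq_zero.mp hz with h | h
  · exact sub_eq_zero.mp h
  · exact absurd h hP0

end Helpers

lemma fin_sum_mulVec {K : Type*} [Field K] {n m : Type*} [Fintype n] [Fintype m]
    (M : m → Matrix n n K) (v : n → K) : (∑ i, M i) *ᵥ v = ∑ i, M i *ᵥ v := by
  ext j
  simp only [Matrix.mulVec, dotProduct, Finset.sum_apply, Matrix.sum_apply, Finset.sum_mul]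
  exact Finset.sum_comm

lemma fin_sum_vecMul {K : Type*} [Field K] {n m : Type*} [Fintype n] [Fintype m]
    (M : m → Matrix n n K) (v : n → K) : v ᵥ* (∑ i, M i) = ∑ i, v ᵥ* M i := by
  ext j
  simp only [Matrix.vecMul, dotProduct, Finset.sum_apply, Matrix.sum_apply, Finset.mul_sum]
  exact Finset.sum_comm

lemma vecMul_smul_mat {K : Type*} [Field K] {n : Type*} [Fintype n]
    (v : n → K) (c : K) (M : Matrix n n K) : v ᵥ* (c • M) = c • (v ᵥ* M) := by
  ext j
  simp only [Matrix.vecMul, Matrix.smul_apply, dotProduct, Pi.smul_apply, smul_eq_mul,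
    Finset.mul_sum]
  exact Finset.sum_congr rfl fun k _ => by ring

lemma dot_sum_right {K : Type*} [Field K] {n : Type*} [Fintype n] {ι : Type*} (s : Finset ι)
    (v : n → K) (f : ι → n → K) : v ⬝ᵥ (∑ i ∈ s, f i) = ∑ i ∈ s, v ⬝ᵥ f i := by
  simp only [dotProduct, Finset.sum_apply, Finset.mul_sum]
  exact Finset.sum_comm

lemma dot_sum_left {K : Type*} [Field K] {n : Type*} [Fintype n] {ι : Type*} (s : Finset ι)
    (v : n → K) (f : ι → n → K) : (∑ i ∈ s, f i) ⬝ᵥ v = ∑ i ∈ s, f i ⬝ᵥ v := by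
  simp only [dotProduct, Finset.sum_apply, Finset.sum_mul]
  exact Finset.sum_comm

namespace LeonardSystem

variable {K : Type*} [Field K] {d : ℕ} (L : LeonardSystem K d)

lemma E_idem (i : Fin (d+1)) : L.E i * L.E i = L.E i := by simpa using L.E_mul i i

lemma Es_idem (i : Fin (d+1)) : L.Estar i * L.Estar i = L.Estar i := by simpa using L.Es_mul i i

lemma E_rank_one (i : Fin (d+1)) : (L.E i).rank = 1 :=
  rank_eq_one_of_partition (by simp) L.E L.E_ne L.E_mul L.E_sum i

lemma Es_rank_one (i : Fin (d+1)) : (L.Estar i).rank = 1 :=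
  rank_eq_one_of_partition (by simp) L.Estar L.Es_ne L.Es_mul L.Es_sum i

lemma exists_E_decomp (i : Fin (d+1)) :
    ∃ a b : Fin (d+1) → K, L.E i = vecMulVec a b ∧ b ⬝ᵥ a = 1 :=
  exists_rank_one_decomp (L.E_rank_one i) (L.E_idem i)

lemma exists_Es_decomp (i : Fin (d+1)) :
    ∃ a b : Fin (d+1) → K, L.Estar i = vecMulVec a b ∧ b ⬝ᵥ a = 1 :=
  exists_rank_one_decomp (L.Es_rank_one i) (L.Es_idem i)

noncomputable def uE (i : Fin (d+1)) : Fin (d+1) → K := (L.exists_E_decomp i).choose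

noncomputable def eE (i : Fin (d+1)) : Fin (d+1) → K := (L.exists_E_decomp i).choose_spec.choose

noncomputable def pEs (i : Fin (d+1)) : Fin (d+1) → K := (L.exists_Es_decomp i).choose

noncomputable def qEs (i : Fin (d+1)) : Fin (d+1) → K := (L.exists_Es_decomp i).choose_spec.choose

lemma E_decomp (i : Fin (d+1)) : L.E i = vecMulVec (L.uE i) (L.eE i) :=
  (L.exists_E_decomp i).choose_spec.choose_spec.1

lemma eE_uE (i : Fin (d+1)) : L.eE i ⬝ᵥ L.uE i = 1 :=
  (L.exists_E_decomp i).choose_spec.choose_spec.2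

lemma Es_decomp (i : Fin (d+1)) : L.Estar i = vecMulVec (L.pEs i) (L.qEs i) :=
  (L.exists_Es_decomp i).choose_spec.choose_spec.1

lemma qEs_pEs (i : Fin (d+1)) : L.qEs i ⬝ᵥ L.pEs i = 1 :=
  (L.exists_Es_decomp i).choose_spec.choose_spec.2

lemma uE_ne (i : Fin (d+1)) : L.uE i ≠ 0 := by
  intro h; have := L.eE_uE i; rw [h] at this; simp at this

lemma eE_ne (i : Fin (d+1)) : L.eE i ≠ 0 := by
  intro h; have := L.eE_uE i; rw [h] at this; simp at this

lemma pEs_ne (i : Fin (d+1)) : L.pEs i ≠ 0 := by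
  intro h; have := L.qEs_pEs i; rw [h] at this; simp at this

lemma qEs_ne (i : Fin (d+1)) : L.qEs i ≠ 0 := by
  intro h; have := L.qEs_pEs i; rw [h] at this; simp at this

lemma eE_uE' (i j : Fin (d+1)) : L.eE i ⬝ᵥ L.uE j = if i = j then 1 else 0 := by
  by_cases h : i = j
  · subst h; simp [L.eE_uE]
  · have h0 := L.E_mul i j
    rw [if_neg h, L.E_decomp i, L.E_decomp j, vmv_mul_vmv] at h0
    rcases smul_eq_zero.mp h0 with hc | hc
    · simp [h, hc]
    · exact absurd hc (vmv_ne_zero (L.uE_ne i) (L.eE_ne j))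

lemma qEs_pEs' (i j : Fin (d+1)) : L.qEs i ⬝ᵥ L.pEs j = if i = j then 1 else 0 := by
  by_cases h : i = j
  · subst h; simp [L.qEs_pEs]
  · have h0 := L.Es_mul i j
    rw [if_neg h, L.Es_decomp i, L.Es_decomp j, vmv_mul_vmv] at h0
    rcases smul_eq_zero.mp h0 with hc | hc
    · simp [h, hc]
    · exact absurd hc (vmv_ne_zero (L.pEs_ne i) (L.qEs_ne j))

lemma A_mulVec_uE (r : Fin (d+1)) : L.A *ᵥ L.uE r = L.θ r • L.uE r := by
  have key : ∀ i : Fin (d+1),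
      (L.θ i • L.E i) *ᵥ L.uE r = (if i = r then L.θ i else 0) • L.uE i := by
    intro i
    rw [Matrix.smul_mulVec, L.E_decomp i, vmv_mulVec, L.eE_uE' i r, smul_smul]
    by_cases h : i = r <;> simp [h]
  rw [L.A_eq, fin_sum_mulVec, Finset.sum_congr rfl (fun i _ => key i),
    Finset.sum_eq_single r (fun b _ hb => by simp [hb]) (by simp)]
  simp

lemma eE_vecMul_A (r : Fin (d+1)) : L.eE r ᵥ* L.A = L.θ r • L.eE r := by
  have key : ∀ i : Fin (d+1),
      L.eE r ᵥ* (L.θ i • L.E i) = (if r = i then L.θ i else 0) • L.eE i := by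
    intro i
    rw [vecMul_smul_mat, L.E_decomp i, vecMul_vmv, L.eE_uE' r i, smul_smul]
    by_cases h : r = i <;> simp [h]
  rw [L.A_eq, fin_sum_vecMul, Finset.sum_congr rfl (fun i _ => key i),
    Finset.sum_eq_single r (fun b _ hb => by simp [Ne.symm hb]) (by simp)]
  simp

lemma As_mulVec_pEs (h : Fin (d+1)) : L.Astar *ᵥ L.pEs h = L.θs h • L.pEs h := by
  have key : ∀ i : Fin (d+1),
      (L.θs i • L.Estar i) *ᵥ L.pEs h = (if i = h then L.θs i else 0) • L.pEs i := by
    intro i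
    rw [Matrix.smul_mulVec, L.Es_decomp i, vmv_mulVec, L.qEs_pEs' i h, smul_smul]
    by_cases hh : i = h <;> simp [hh]
  rw [L.As_eq, fin_sum_mulVec, Finset.sum_congr rfl (fun i _ => key i),
    Finset.sum_eq_single h (fun b _ hb => by simp [hb]) (by simp)]
  simp

lemma qEs_vecMul_As (h : Fin (d+1)) : L.qEs h ᵥ* L.Astar = L.θs h • L.qEs h := by
  have key : ∀ i : Fin (d+1),
      L.qEs h ᵥ* (L.θs i • L.Estar i) = (if h = i then L.θs i else 0) • L.qEs i := by
    intro i
    rw [vecMul_smul_mat, L.Es_decomp i, vecMul_vmv, L.qEs_pEs' h i, smul_smul]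
    by_cases hh : h = i <;> simp [hh]
  rw [L.As_eq, fin_sum_vecMul, Finset.sum_congr rfl (fun i _ => key i),
    Finset.sum_eq_single h (fun b _ hb => by simp [Ne.symm hb]) (by simp)]
  simp

lemma resE (v : Fin (d+1) → K) : ∑ r, (L.eE r ⬝ᵥ v) • L.uE r = v := by
  have key : ∀ r : Fin (d+1), (L.eE r ⬝ᵥ v) • L.uE r = L.E r *ᵥ v := by
    intro r; rw [L.E_decomp, vmv_mulVec]
  rw [Finset.sum_congr rfl (fun r _ => key r), ← fin_sum_mulVec, L.E_sum, Matrix.one_mulVec]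

lemma resEs (v : Fin (d+1) → K) : ∑ h, (L.qEs h ⬝ᵥ v) • L.pEs h = v := by
  have key : ∀ h : Fin (d+1), (L.qEs h ⬝ᵥ v) • L.pEs h = L.Estar h *ᵥ v := by
    intro h; rw [L.Es_decomp, vmv_mulVec]
  rw [Finset.sum_congr rfl (fun h _ => key h), ← fin_sum_mulVec, L.Es_sum, Matrix.one_mulVec]

noncomputable def bSt (r r' : Fin (d+1)) : K := L.eE r ⬝ᵥ (L.Astar *ᵥ L.uE r')

noncomputable def bA (h h' : Fin (d+1)) : K := L.qEs h ⬝ᵥ (L.A *ᵥ L.pEs h')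

lemma E_As_E (r r' : Fin (d+1)) :
    L.E r * L.Astar * L.E r' = L.bSt r r' • vecMulVec (L.uE r) (L.eE r') := by
  rw [L.E_decomp r, L.E_decomp r', vmv_mul, vmv_mul_vmv, bSt, Matrix.dotProduct_mulVec]

lemma Es_A_Es (h h' : Fin (d+1)) :
    L.Estar h * L.A * L.Estar h' = L.bA h h' • vecMulVec (L.pEs h) (L.qEs h') := by
  rw [L.Es_decomp h, L.Es_decomp h', vmv_mul, vmv_mul_vmv, bA, Matrix.dotProduct_mulVec]

lemma bSt_zero {r r' : Fin (d+1)} (h : ((r : ℤ) - (r' : ℤ)).natAbs > 1) : L.bSt r r' = 0 := by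
  have h0 := L.trid0 r r' h
  rw [L.E_As_E] at h0
  rcases smul_eq_zero.mp h0 with hc | hc
  · exact hc
  · exact absurd hc (vmv_ne_zero (L.uE_ne r) (L.eE_ne r'))

lemma bSt_ne {r r' : Fin (d+1)} (h : ((r : ℤ) - (r' : ℤ)).natAbs = 1) : L.bSt r r' ≠ 0 := by
  intro h0
  exact L.trid1 r r' h (by rw [L.E_As_E, h0, zero_smul])

lemma bA_zero {h h' : Fin (d+1)} (hh : ((h : ℤ) - (h' : ℤ)).natAbs > 1) : L.bA h h' = 0 := by
  have h0 := L.strid0 h h' hh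
  rw [L.Es_A_Es] at h0
  rcases smul_eq_zero.mp h0 with hc | hc
  · exact hc
  · exact absurd hc (vmv_ne_zero (L.pEs_ne h) (L.qEs_ne h'))

lemma bA_ne {h h' : Fin (d+1)} (hh : ((h : ℤ) - (h' : ℤ)).natAbs = 1) : L.bA h h' ≠ 0 := by
  intro h0
  exact L.strid1 h h' hh (by rw [L.Es_A_Es, h0, zero_smul])

end LeonardSystem


namespace LeonardSystem

variable {K : Type*} [Field K] {d : ℕ} (L : LeonardSystem K d)

lemma θN_fin (r : Fin (d+1)) : L.θN (r : ℕ) = L.θ r := by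
  rw [θN, dif_pos r.isLt]

lemma θsN_fin (r : Fin (d+1)) : L.θsN (r : ℕ) = L.θs r := by
  rw [θsN, dif_pos r.isLt]

lemma diag_mul_diag (f g : Fin (d+1) → K) :
    (∑ r, f r • L.E r) * (∑ s, g s • L.E s) = ∑ r, (f r * g r) • L.E r := by
  rw [Finset.sum_mul]
  refine Finset.sum_congr rfl fun r _ => ?_
  rw [Finset.mul_sum, Finset.sum_eq_single r (fun s _ hs => ?_) (by simp)]
  · rw [Matrix.smul_mul, Matrix.mul_smul, smul_smul]
    have := L.E_mul r r
    rw [if_pos rfl] at this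
    rw [this]
  · rw [Matrix.smul_mul, Matrix.mul_smul, smul_smul]
    have := L.E_mul r s
    rw [if_neg (Ne.symm hs)] at this
    rw [this, smul_zero]

lemma diags_mul_diags (f g : Fin (d+1) → K) :
    (∑ r, f r • L.Estar r) * (∑ s, g s • L.Estar s) = ∑ r, (f r * g r) • L.Estar r := by
  rw [Finset.sum_mul]
  refine Finset.sum_congr rfl fun r _ => ?_
  rw [Finset.mul_sum, Finset.sum_eq_single r (fun s _ hs => ?_) (by simp)]
  · rw [Matrix.smul_mul, Matrix.mul_smul, smul_smul]
    have := L.Es_mul r r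
    rw [if_pos rfl] at this
    rw [this]
  · rw [Matrix.smul_mul, Matrix.mul_smul, smul_smul]
    have := L.Es_mul r s
    rw [if_neg (Ne.symm hs)] at this
    rw [this, smul_zero]

lemma A_sub_one (c : K) : L.A - c • 1 = ∑ r, (L.θ r - c) • L.E r := by
  have h1 : (c • (1 : Matrix (Fin (d+1)) (Fin (d+1)) K)) = ∑ r, c • L.E r := by
    rw [← Finset.smul_sum, L.E_sum]
  rw [L.A_eq, h1, ← Finset.sum_sub_distrib]
  exact Finset.sum_congr rfl fun r _ => by rw [sub_smul]

lemma As_sub_one (c : K) : L.Astar - c • 1 = ∑ r, (L.θs r - c) • L.Estar r := by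
  have h1 : (c • (1 : Matrix (Fin (d+1)) (Fin (d+1)) K)) = ∑ r, c • L.Estar r := by
    rw [← Finset.smul_sum, L.Es_sum]
  rw [L.As_eq, h1, ← Finset.sum_sub_distrib]
  exact Finset.sum_congr rfl fun r _ => by rw [sub_smul]

lemma tauS_succ (i : ℕ) (x : K) : L.tauS (i+1) x = L.tauS i x * (x - L.θN i) :=
  Finset.prod_range_succ _ _

lemma tausS_succ (i : ℕ) (x : K) : L.tausS (i+1) x = L.tausS i x * (x - L.θsN i) :=
  Finset.prod_range_succ _ _

lemma tauA_expand (i : ℕ) : L.tauA i = ∑ r, L.tauS i (L.θ r) • L.E r := by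
  induction i with
  | zero =>
    have : ∀ r : Fin (d+1), L.tauS 0 (L.θ r) • L.E r = L.E r := by
      intro r; simp [tauS]
    rw [tauA, Finset.sum_congr rfl (fun r _ => this r), L.E_sum]
  | succ n ih =>
    rw [tauA, ih, L.A_sub_one (L.θN n), diag_mul_diag]
    refine Finset.sum_congr rfl fun r _ => ?_
    rw [tauS_succ]

lemma tausA_expand (i : ℕ) : L.tausA i = ∑ r, L.tausS i (L.θs r) • L.Estar r := by
  induction i with
  | zero =>
    have : ∀ r : Fin (d+1), L.tausS 0 (L.θs r) • L.Estar r = L.Estar r := by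
      intro r; simp [tausS]
    rw [tausA, Finset.sum_congr rfl (fun r _ => this r), L.Es_sum]
  | succ n ih =>
    rw [tausA, ih, L.As_sub_one (L.θsN n), diags_mul_diags]
    refine Finset.sum_congr rfl fun r _ => ?_
    rw [tausS_succ]

lemma tauA_comm (i : ℕ) (c : K) : L.tauA i * (L.A - c • 1) = (L.A - c • 1) * L.tauA i := by
  rw [tauA_expand, L.A_sub_one c, diag_mul_diag, diag_mul_diag]
  exact Finset.sum_congr rfl fun r _ => by rw [mul_comm]

lemma tausA_comm (i : ℕ) (c : K) :
    L.tausA i * (L.Astar - c • 1) = (L.Astar - c • 1) * L.tausA i := by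
  rw [tausA_expand, L.As_sub_one c, diags_mul_diags, diags_mul_diags]
  exact Finset.sum_congr rfl fun r _ => by rw [mul_comm]

/-- The split-basis vectors `x_i = τ_i(A) E*_0`-image. -/
noncomputable def xv (i : ℕ) : Fin (d+1) → K := L.tauA i *ᵥ L.pEs 0

/-- Coordinates of `E*_0`'s eigenvector in the `A`-eigenbasis. -/
noncomputable def βE (r : Fin (d+1)) : K := L.eE r ⬝ᵥ L.pEs 0

lemma xv_zero : L.xv 0 = L.pEs 0 := by
  rw [xv, tauA, Matrix.one_mulVec]

lemma xv_succ (i : ℕ) : L.xv (i+1) = L.A *ᵥ L.xv i - L.θN i • L.xv i := by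
  show (L.tauA i * (L.A - L.θN i • 1)) *ᵥ L.pEs 0 = _
  rw [L.tauA_comm i (L.θN i), ← Matrix.mulVec_mulVec, Matrix.sub_mulVec,
    Matrix.smul_mulVec, Matrix.one_mulVec]
  rfl

lemma eE_xv (i : ℕ) (r : Fin (d+1)) :
    L.eE r ⬝ᵥ L.xv i = L.tauS i (L.θ r) * L.βE r := by
  have key : ∀ r' : Fin (d+1),
      (L.tauS i (L.θ r') • L.E r') *ᵥ L.pEs 0 = (L.tauS i (L.θ r') * L.βE r') • L.uE r' := by
    intro r'
    rw [Matrix.smul_mulVec, L.E_decomp, vmv_mulVec, smul_smul]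
    rfl
  rw [xv, tauA_expand, fin_sum_mulVec, Finset.sum_congr rfl (fun r' _ => key r')]
  rw [dot_sum_right]
  rw [Finset.sum_eq_single r (fun r' _ hr' => ?_) (by simp)]
  · rw [dotProduct_smul, L.eE_uE' r r, if_pos rfl, smul_eq_mul, mul_one]
  · rw [dotProduct_smul, L.eE_uE' r r', if_neg (Ne.symm hr'), smul_eq_mul, mul_zero]

lemma xv_expand (i : ℕ) : L.xv i = ∑ r, (L.tauS i (L.θ r) * L.βE r) • L.uE r := by
  conv_lhs => rw [← L.resE (L.xv i)]
  exact Finset.sum_congr rfl fun r _ => by rw [eE_xv]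

lemma tauS_root {r i : ℕ} (hr : r < i) : L.tauS i (L.θN r) = 0 := by
  apply Finset.prod_eq_zero (Finset.mem_range.mpr hr)
  rw [sub_self]

lemma tausS_root {r i : ℕ} (hr : r < i) : L.tausS i (L.θsN r) = 0 := by
  apply Finset.prod_eq_zero (Finset.mem_range.mpr hr)
  rw [sub_self]

lemma tauS_diag_ne {r : ℕ} (hr : r < d+1) : L.tauS r (L.θN r) ≠ 0 := by
  rw [tauS]
  rw [Finset.prod_ne_zero_iff]
  intro j hj
  rw [Finset.mem_range] at hj
  have hjd : j < d + 1 := by omega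
  rw [θN, θN, dif_pos hr, dif_pos hjd, sub_ne_zero]
  intro h
  have := L.θ_inj h
  exact absurd (congrArg Fin.val this) (by simp; omega)

lemma tausS_diag_ne {r : ℕ} (hr : r < d+1) : L.tausS r (L.θsN r) ≠ 0 := by
  rw [tausS]
  rw [Finset.prod_ne_zero_iff]
  intro j hj
  rw [Finset.mem_range] at hj
  have hjd : j < d + 1 := by omega
  rw [θsN, θsN, dif_pos hr, dif_pos hjd, sub_ne_zero]
  intro h
  have := L.θs_inj h
  exact absurd (congrArg Fin.val this) (by simp; omega)

lemma qEs_dot_As_mulVec (h : Fin (d+1)) (v : Fin (d+1) → K) :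
    L.qEs h ⬝ᵥ (L.Astar *ᵥ v) = L.θs h * (L.qEs h ⬝ᵥ v) := by
  rw [Matrix.dotProduct_mulVec, qEs_vecMul_As, smul_dotProduct, smul_eq_mul]

lemma eE_dot_A_mulVec (r : Fin (d+1)) (v : Fin (d+1) → K) :
    L.eE r ⬝ᵥ (L.A *ᵥ v) = L.θ r * (L.eE r ⬝ᵥ v) := by
  rw [Matrix.dotProduct_mulVec, eE_vecMul_A, smul_dotProduct, smul_eq_mul]

end LeonardSystem


lemma mulVec_sum_vec {K : Type*} [Field K] {n : Type*} [Fintype n] {ι : Type*} (s : Finset ι)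
    (A : Matrix n n K) (v : ι → n → K) : A *ᵥ (∑ i ∈ s, v i) = ∑ i ∈ s, A *ᵥ v i := by
  ext j
  simp only [Matrix.mulVec, dotProduct, Finset.sum_apply, Finset.mul_sum]
  exact Finset.sum_comm

namespace LeonardSystem

variable {K : Type*} [Field K] {d : ℕ} (L : LeonardSystem K d)

lemma qEs_xv_zero : ∀ (j : ℕ) (h : Fin (d+1)), j < (h : ℕ) → L.qEs h ⬝ᵥ L.xv j = 0 := by
  intro j
  induction j with
  | zero =>
    intro h hh
    rw [L.xv_zero, L.qEs_pEs', if_neg]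
    intro he
    rw [he] at hh
    simp at hh
  | succ j ih =>
    intro h hh
    rw [L.xv_succ, dotProduct_sub, dotProduct_smul, ih h (by omega), smul_zero, sub_zero]
    conv_lhs => rw [← L.resEs (L.xv j)]
    rw [mulVec_sum_vec, dot_sum_right]
    apply Finset.sum_eq_zero
    intro h' _
    rw [Matrix.mulVec_smul, dotProduct_smul, smul_eq_mul]
    by_cases hc : j < (h' : ℕ)
    · rw [ih h' hc, zero_mul]
    · have : L.bA h h' = 0 := L.bA_zero (by omega)
      rw [bA] at this
      rw [this, mul_zero]

lemma qEs_xv_diag : ∀ (j : ℕ) (hj : j < d + 1), L.qEs ⟨j, hj⟩ ⬝ᵥ L.xv j ≠ 0 := by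
  intro j
  induction j with
  | zero =>
    intro hj
    rw [L.xv_zero]
    have : (⟨0, hj⟩ : Fin (d+1)) = 0 := rfl
    rw [this, L.qEs_pEs 0]
    exact one_ne_zero
  | succ j ih =>
    intro hj
    have hjd : j < d + 1 := by omega
    rw [L.xv_succ, dotProduct_sub, dotProduct_smul,
      L.qEs_xv_zero j ⟨j+1, hj⟩ (by simp), smul_zero, sub_zero]
    conv_lhs => rw [← L.resEs (L.xv j)]
    rw [mulVec_sum_vec, dot_sum_right]
    rw [Finset.sum_eq_single (⟨j, hjd⟩ : Fin (d+1)) (fun h' _ hne => ?_) (by simp)]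
    · rw [Matrix.mulVec_smul, dotProduct_smul, smul_eq_mul]
      apply mul_ne_zero (ih hjd)
      exact L.bA_ne (by simp)
    · rw [Matrix.mulVec_smul, dotProduct_smul, smul_eq_mul]
      have hv : (h' : ℕ) ≠ j := fun hvv => hne (Fin.ext hvv)
      by_cases hc : j < (h' : ℕ)
      · rw [L.qEs_xv_zero j h' hc, zero_mul]
      · have : L.bA ⟨j+1, hj⟩ h' = 0 := L.bA_zero (by simp; omega)
        rw [bA] at this
        rw [this, mul_zero]

lemma xv_rep : ∀ (m : ℕ), m ≤ d + 1 → ∀ v : Fin (d+1) → K,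
    (∀ h : Fin (d+1), m ≤ (h : ℕ) → L.qEs h ⬝ᵥ v = 0) →
    ∃ g : ℕ → K, v = ∑ j ∈ Finset.range m, g j • L.xv j := by
  intro m
  induction m with
  | zero =>
    intro _ v hv
    refine ⟨fun _ => 0, ?_⟩
    rw [← L.resEs v]
    simp only [Finset.range_zero, Finset.sum_empty]
    apply Finset.sum_eq_zero
    intro h _
    rw [hv h (by omega), zero_smul]
  | succ m ih =>
    intro hm v hv
    have hmd : m < d + 1 := by omega
    set γ := (L.qEs ⟨m, hmd⟩ ⬝ᵥ v) / (L.qEs ⟨m, hmd⟩ ⬝ᵥ L.xv m) with hγ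
    have hv' : ∀ h : Fin (d+1), m ≤ (h : ℕ) → L.qEs h ⬝ᵥ (v - γ • L.xv m) = 0 := by
      intro h hh
      rw [dotProduct_sub, dotProduct_smul, smul_eq_mul]
      rcases Nat.lt_or_ge m (h : ℕ) with hlt | hge
      · rw [hv h (by omega), L.qEs_xv_zero m h hlt, mul_zero, sub_zero]
      · have hhm : h = (⟨m, hmd⟩ : Fin (d+1)) := Fin.ext (by simp only [Fin.val_mk]; omega)
        rw [hhm, hγ, div_mul_cancel₀ _ (L.qEs_xv_diag m hmd), sub_self]
    obtain ⟨g, hg⟩ := ih (by omega) (v - γ • L.xv m) hv'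
    refine ⟨fun j => if j = m then γ else g j, ?_⟩
    have hsum : ∑ j ∈ Finset.range (m+1), (if j = m then γ else g j) • L.xv j =
        (∑ j ∈ Finset.range m, g j • L.xv j) + γ • L.xv m := by
      rw [Finset.sum_range_succ, if_pos rfl]
      rw [Finset.sum_congr rfl (fun j hj => by
        rw [if_neg (by rw [Finset.mem_range] at hj; omega)])]
    rw [hsum, ← hg]
    simp

lemma βE_ne (r : Fin (d+1)) : L.βE r ≠ 0 := by
  intro hzero
  have hx : ∀ j : ℕ, L.eE r ⬝ᵥ L.xv j = 0 := by
    intro j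
    rw [L.eE_xv, hzero, mul_zero]
  have hp : ∀ h : Fin (d+1), L.eE r ⬝ᵥ L.pEs h = 0 := by
    intro h
    obtain ⟨g, hg⟩ := L.xv_rep (d+1) le_rfl (L.pEs h) (fun h' hh' => by
      exfalso; have := h'.isLt; omega)
    rw [hg, dot_sum_right]
    apply Finset.sum_eq_zero
    intro j _
    rw [dotProduct_smul, hx j, smul_zero]
  have he : L.eE r = 0 := by
    have h1 : L.eE r = L.eE r ᵥ* (1 : Matrix (Fin (d+1)) (Fin (d+1)) K) :=
      (Matrix.vecMul_one _).symm
    rw [h1, ← L.Es_sum, fin_sum_vecMul]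
    apply Finset.sum_eq_zero
    intro h _
    rw [L.Es_decomp, vecMul_vmv, hp h, zero_smul]
  exact L.eE_ne r he

lemma vanish : ∀ (m : ℕ), m ≤ d + 1 → ∀ v : Fin (d+1) → K,
    (∀ h : Fin (d+1), m ≤ (h : ℕ) → L.qEs h ⬝ᵥ v = 0) →
    (∀ r : Fin (d+1), (r : ℕ) < m → L.eE r ⬝ᵥ v = 0) → v = 0 := by
  intro m hm v hq he
  obtain ⟨g, hg⟩ := L.xv_rep m hm v hq
  have hcoef : ∀ r : ℕ, r < m → g r = 0 := by
    intro r
    induction r using Nat.strong_induction_on with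
    | _ r ihr =>
      intro hrm
      have hrd : r < d + 1 := by omega
      have h0 := he ⟨r, hrd⟩ (by simpa using hrm)
      have hθ : L.θ (⟨r, hrd⟩ : Fin (d+1)) = L.θN r := by
        rw [θN, dif_pos hrd]
      rw [hg, dot_sum_right] at h0
      have hside : ∀ j ∈ Finset.range m, j ≠ r →
          L.eE ⟨r, hrd⟩ ⬝ᵥ (g j • L.xv j) = 0 := by
        intro j _ hne
        rw [dotProduct_smul, smul_eq_mul, L.eE_xv, hθ]
        rcases Nat.lt_or_ge r j with hlt | hge
        · rw [L.tauS_root hlt, zero_mul, mul_zero]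
        · rw [ihr j (by omega) (by omega), zero_mul]
      rw [Finset.sum_eq_single_of_mem r (Finset.mem_range.mpr hrm) hside] at h0
      rw [dotProduct_smul, smul_eq_mul, L.eE_xv, hθ] at h0
      rcases mul_eq_zero.mp h0 with h1 | h1
      · exact h1
      · exfalso
        rcases mul_eq_zero.mp h1 with h2 | h2
        · exact L.tauS_diag_ne hrd h2
        · exact L.βE_ne _ h2
  rw [hg]
  exact Finset.sum_eq_zero (fun j hj => by
    rw [hcoef j (Finset.mem_range.mp hj), zero_smul])

end LeonardSystem

namespace LeonardSystem

variable {K : Type*} [Field K] {d : ℕ} (L : LeonardSystem K d)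

lemma θsN_mk {i : ℕ} (hi : i < d+1) : L.θsN i = L.θs ⟨i, hi⟩ := by rw [θsN, dif_pos hi]

lemma θN_mk {i : ℕ} (hi : i < d+1) : L.θN i = L.θ ⟨i, hi⟩ := by rw [θN, dif_pos hi]

lemma θsN_zero : L.θsN 0 = L.θs 0 := by
  rw [L.θsN_mk (Nat.succ_pos d)]
  congr 1

lemma q_pair_y (i : ℕ) (h : Fin (d+1)) :
    L.qEs h ⬝ᵥ ((L.Astar - L.θsN i • 1) *ᵥ L.xv i) =
      (L.θs h - L.θsN i) * (L.qEs h ⬝ᵥ L.xv i) := by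
  rw [Matrix.sub_mulVec, Matrix.smul_mulVec, Matrix.one_mulVec, dotProduct_sub,
    L.qEs_dot_As_mulVec, dotProduct_smul, smul_eq_mul, sub_mul]

lemma e_pair_As_xv (r : Fin (d+1)) (i : ℕ) :
    L.eE r ⬝ᵥ (L.Astar *ᵥ L.xv i) = ∑ r', (L.tauS i (L.θ r') * L.βE r') * L.bSt r r' := by
  conv_lhs => rw [L.xv_expand i]
  rw [mulVec_sum_vec, dot_sum_right]
  refine Finset.sum_congr rfl fun r' _ => ?_
  rw [Matrix.mulVec_smul, dotProduct_smul, smul_eq_mul, bSt]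

lemma action (i : ℕ) (hi1 : 1 ≤ i) (hi2 : i ≤ d) :
    ∃ f : K, (L.Astar - L.θsN i • 1) *ᵥ L.xv i = f • L.xv (i-1) := by
  have hid : i < d + 1 := by omega
  have hi1d : i - 1 < d + 1 := by omega
  set y := (L.Astar - L.θsN i • 1) *ᵥ L.xv i with hy
  have hqy : ∀ h : Fin (d+1), i ≤ (h : ℕ) → L.qEs h ⬝ᵥ y = 0 := by
    intro h hh
    rw [hy, L.q_pair_y]
    rcases Nat.lt_or_ge i (h : ℕ) with hlt | hge
    · rw [L.qEs_xv_zero i h hlt, mul_zero]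
    · have hhi : h = (⟨i, hid⟩ : Fin (d+1)) := Fin.ext (by simp only [Fin.val_mk]; omega)
      rw [hhi, ← L.θsN_mk hid, sub_self, zero_mul]
  have hey : ∀ r : Fin (d+1), (r : ℕ) + 2 ≤ i → L.eE r ⬝ᵥ y = 0 := by
    intro r hr
    rw [hy, Matrix.sub_mulVec, Matrix.smul_mulVec, Matrix.one_mulVec, dotProduct_sub,
      dotProduct_smul, smul_eq_mul, L.e_pair_As_xv]
    have hx0 : L.eE r ⬝ᵥ L.xv i = 0 := by
      rw [L.eE_xv, ← L.θN_fin r, L.tauS_root (by omega), zero_mul]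
    rw [hx0, mul_zero, sub_zero]
    apply Finset.sum_eq_zero
    intro r' _
    rcases Nat.lt_or_ge (r' : ℕ) i with hlt | hge
    · rw [← L.θN_fin r', L.tauS_root hlt, zero_mul, zero_mul]
    · rw [L.bSt_zero (by omega), mul_zero]
  set f := (L.qEs ⟨i-1, hi1d⟩ ⬝ᵥ y) / (L.qEs ⟨i-1, hi1d⟩ ⬝ᵥ L.xv (i-1)) with hf
  refine ⟨f, sub_eq_zero.mp (L.vanish (i-1) (by omega) _ ?_ ?_)⟩
  · intro h hh
    rw [dotProduct_sub, dotProduct_smul, smul_eq_mul]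
    rcases Nat.lt_or_ge (i-1) (h : ℕ) with hlt | hge
    · rw [hqy h (by omega), L.qEs_xv_zero (i-1) h hlt, mul_zero, sub_zero]
    · have hhm : h = (⟨i-1, hi1d⟩ : Fin (d+1)) := Fin.ext (by simp only [Fin.val_mk]; omega)
      rw [hhm, hf, div_mul_cancel₀ _ (L.qEs_xv_diag (i-1) hi1d), sub_self]
  · intro r hr
    rw [dotProduct_sub, dotProduct_smul, smul_eq_mul, hey r (by omega),
      L.eE_xv, ← L.θN_fin r, L.tauS_root (by omega), zero_mul, mul_zero, sub_zero]

noncomputable def tT (i : ℕ) : K := L.qEs 0 ⬝ᵥ L.xv i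

lemma tT_zero : L.tT 0 = 1 := by rw [tT, L.xv_zero, L.qEs_pEs]

lemma trace_tauA (i : ℕ) : (L.tauA i * L.Estar 0).trace = L.tT i := by
  rw [L.Es_decomp 0, trace_mul_vmv, tT, xv]

lemma varphi_eq (i : ℕ) : L.varphi i = (L.θsN 0 - L.θsN i) * L.tT i / L.tT (i-1) := by
  rw [varphi, L.trace_tauA, L.trace_tauA]

lemma q0_pair (i : ℕ) : L.qEs 0 ⬝ᵥ ((L.Astar - L.θsN i • 1) *ᵥ L.xv i) =
    (L.θsN 0 - L.θsN i) * L.tT i := by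
  rw [L.q_pair_y, tT, L.θsN_zero]

lemma chain : ∀ i : ℕ, i ≤ d → L.tT i ≠ 0 ∧
    (1 ≤ i → (L.Astar - L.θsN i • 1) *ᵥ L.xv i = L.varphi i • L.xv (i-1)) := by
  intro i
  induction i with
  | zero =>
    intro _
    exact ⟨by rw [L.tT_zero]; exact one_ne_zero, fun h => absurd h (by omega)⟩
  | succ i ih =>
    intro hi
    have hti := (ih (by omega)).1
    obtain ⟨f, hact⟩ := L.action (i+1) (by omega) hi
    have hfrel : (L.θsN 0 - L.θsN (i+1)) * L.tT (i+1) = f * L.tT i := by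
      have h1 := L.q0_pair (i+1)
      rw [hact, dotProduct_smul, smul_eq_mul] at h1
      rw [← h1, tT, Nat.add_sub_cancel]
    have hfv : f = L.varphi (i+1) := by
      rw [L.varphi_eq, Nat.add_sub_cancel, hfrel, mul_div_cancel_right₀ f hti]
    constructor
    · intro h0
      have hf0 : f = 0 := by
        have h2 := hfrel
        rw [h0, mul_zero] at h2
        rcases mul_eq_zero.mp h2.symm with h | h
        · exact h
        · exact absurd h hti
      rw [hf0, zero_smul] at hact
      have hAs : L.Astar *ᵥ L.xv (i+1) = L.θsN (i+1) • L.xv (i+1) := by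
        rw [Matrix.sub_mulVec, Matrix.smul_mulVec, Matrix.one_mulVec] at hact
        exact sub_eq_zero.mp hact
      have hii : i < d + 1 := by omega
      have hi1 : i + 1 < d + 1 := by omega
      have hL := congrArg (fun w => L.eE ⟨i, hii⟩ ⬝ᵥ w) hAs
      rw [L.e_pair_As_xv, dotProduct_smul, smul_eq_mul, L.eE_xv] at hL
      have hrhs : L.tauS (i+1) (L.θ (⟨i, hii⟩ : Fin (d+1))) = 0 := by
        rw [← L.θN_fin]
        exact L.tauS_root (by simp only [Fin.val_mk]; omega)
      rw [hrhs, zero_mul, mul_zero] at hL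
      have hsum : ∑ r', (L.tauS (i+1) (L.θ r') * L.βE r') * L.bSt ⟨i, hii⟩ r' =
          (L.tauS (i+1) (L.θ (⟨i+1, hi1⟩ : Fin (d+1))) * L.βE ⟨i+1, hi1⟩) *
            L.bSt ⟨i, hii⟩ ⟨i+1, hi1⟩ := by
        apply Finset.sum_eq_single_of_mem _ (Finset.mem_univ _)
        intro r' _ hne
        rcases Nat.lt_or_ge (r' : ℕ) (i+1) with hlt | hge
        · rw [← L.θN_fin r', L.tauS_root hlt, zero_mul, zero_mul]
        · have hge2 : (r' : ℕ) ≥ i + 2 := by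
            have hv : (r' : ℕ) ≠ i + 1 := fun hv =>
              hne (Fin.ext (by simp only [Fin.val_mk]; omega))
            omega
          rw [L.bSt_zero (by simp only [Fin.val_mk]; omega), mul_zero]
      rw [hsum] at hL
      rcases mul_eq_zero.mp hL with h | h
      · rcases mul_eq_zero.mp h with h2 | h2
        · rw [← L.θN_fin] at h2
          exact L.tauS_diag_ne (r := i+1) (by omega) h2
        · exact L.βE_ne _ h2
      · exact L.bSt_ne (by simp only [Fin.val_mk]; omega) h
    · intro _
      rw [← hfv]
      exact hact

noncomputable def yv (k : ℕ) : Fin (d+1) → K := L.eE 0 ᵥ* L.tausA k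

lemma yv_zero : L.yv 0 = L.eE 0 := by rw [yv, tausA, Matrix.vecMul_one]

lemma yv_succ (k : ℕ) : L.yv (k+1) = L.yv k ᵥ* (L.Astar - L.θsN k • 1) := by
  rw [yv, tausA, ← Matrix.vecMul_vecMul, yv]

lemma yv_uE : ∀ (k : ℕ) (r : Fin (d+1)), k < (r : ℕ) → L.yv k ⬝ᵥ L.uE r = 0 := by
  intro k
  induction k with
  | zero =>
    intro r hr
    rw [L.yv_zero, L.eE_uE', if_neg]
    intro h
    rw [← h] at hr
    simp at hr
  | succ k ih =>
    intro r hr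
    rw [L.yv_succ, ← Matrix.dotProduct_mulVec, Matrix.sub_mulVec, Matrix.smul_mulVec,
      Matrix.one_mulVec, dotProduct_sub, dotProduct_smul, smul_eq_mul, ih r (by omega),
      mul_zero, sub_zero]
    have hexp : L.Astar *ᵥ L.uE r = ∑ r', L.bSt r' r • L.uE r' := by
      conv_lhs => rw [← L.resE (L.Astar *ᵥ L.uE r)]
      exact Finset.sum_congr rfl fun r' _ => by rw [bSt]
    rw [hexp, dot_sum_right]
    apply Finset.sum_eq_zero
    intro r' _
    rw [dotProduct_smul, smul_eq_mul]
    rcases Nat.lt_or_ge k (r' : ℕ) with hlt | hge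
    · rw [ih r' hlt, mul_zero]
    · rw [L.bSt_zero (by omega), zero_mul]

lemma yv_xv_lt (k i : ℕ) (hki : k < i) : L.yv k ⬝ᵥ L.xv i = 0 := by
  conv_lhs => rw [L.xv_expand i]
  rw [dot_sum_right]
  apply Finset.sum_eq_zero
  intro r _
  rw [dotProduct_smul, smul_eq_mul]
  rcases Nat.lt_or_ge (r : ℕ) i with hlt | hge
  · rw [← L.θN_fin r, L.tauS_root hlt, zero_mul, zero_mul]
  · rw [L.yv_uE k r (by omega), mul_zero]

lemma yv_pEs (k : ℕ) (h : Fin (d+1)) :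
    L.yv k ⬝ᵥ L.pEs h = L.tausS k (L.θs h) * (L.eE 0 ⬝ᵥ L.pEs h) := by
  rw [yv, ← Matrix.dotProduct_mulVec]
  have hstep : L.tausA k *ᵥ L.pEs h = L.tausS k (L.θs h) • L.pEs h := by
    rw [L.tausA_expand, fin_sum_mulVec]
    rw [Finset.sum_eq_single h (fun h' _ hne => ?_) (by simp)]
    · rw [Matrix.smul_mulVec, L.Es_decomp, vmv_mulVec, L.qEs_pEs' h h, if_pos rfl,
        one_smul]
    · rw [Matrix.smul_mulVec, L.Es_decomp, vmv_mulVec, L.qEs_pEs' h' h, if_neg hne,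
        zero_smul, smul_zero]
  rw [hstep, dotProduct_smul, smul_eq_mul]

lemma yv_xv_gt (k i : ℕ) (hik : i < k) : L.yv k ⬝ᵥ L.xv i = 0 := by
  conv_lhs => rw [← L.resEs (L.xv i)]
  rw [dot_sum_right]
  apply Finset.sum_eq_zero
  intro h _
  rw [dotProduct_smul, smul_eq_mul, L.yv_pEs]
  rcases Nat.lt_or_ge i (h : ℕ) with hlt | hge
  · rw [L.qEs_xv_zero i h hlt, zero_mul]
  · rw [← L.θsN_fin h, L.tausS_root (by omega), zero_mul, mul_zero]

lemma yv_xv_diag : ∀ i : ℕ, i ≤ d → L.yv i ⬝ᵥ L.xv i = L.varphiProd i * L.βE 0 := by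
  intro i
  induction i with
  | zero =>
    intro _
    rw [L.yv_zero, L.xv_zero, varphiProd]
    simp [βE]
  | succ i ih =>
    intro hi
    have h1 : L.yv (i+1) ⬝ᵥ L.xv (i+1) =
        L.yv i ⬝ᵥ ((L.Astar - L.θsN i • 1) *ᵥ L.xv (i+1)) := by
      rw [L.yv_succ]
      exact (Matrix.dotProduct_mulVec _ _ _).symm
    have hact := (L.chain (i+1) hi).2 (by omega)
    rw [Nat.add_sub_cancel] at hact
    have h2 : (L.Astar - L.θsN i • 1) *ᵥ L.xv (i+1) =
        L.varphi (i+1) • L.xv i + (L.θsN (i+1) - L.θsN i) • L.xv (i+1) := by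
      have e1 : L.Astar *ᵥ L.xv (i+1) =
          L.varphi (i+1) • L.xv i + L.θsN (i+1) • L.xv (i+1) := by
        rw [Matrix.sub_mulVec, Matrix.smul_mulVec, Matrix.one_mulVec] at hact
        exact sub_eq_iff_eq_add.mp hact
      rw [Matrix.sub_mulVec, Matrix.smul_mulVec, Matrix.one_mulVec, e1, sub_smul]
      abel
    rw [h1, h2, dotProduct_add, dotProduct_smul, dotProduct_smul, smul_eq_mul, smul_eq_mul,
      L.yv_xv_lt i (i+1) (by omega), mul_zero, add_zero, ih (by omega)]
    have hp : L.varphiProd (i+1) = L.varphiProd i * L.varphi (i+1) :=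
      Finset.prod_range_succ _ _
    rw [hp]
    ring

end LeonardSystem

/-- `E_0 τ*_i(A*) τ_j(A) E*_0 = δ_{ij} φ_1⋯φ_i E_0 E*_0`. -/
theorem LeonardSystem.reduction_tau {K : Type*} [Field K] {d : ℕ}
    (L : LeonardSystem K d) :
    ∀ i j : Fin (d+1),
      L.E 0 * L.tausA (i : ℕ) * L.tauA (j : ℕ) * L.Estar 0 =
        if i = j then L.varphiProd (i : ℕ) • (L.E 0 * L.Estar 0) else 0 := by
  intro i j
  have key : L.E 0 * L.tausA (i : ℕ) * L.tauA (j : ℕ) * L.Estar 0 =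
      (L.yv (i : ℕ) ⬝ᵥ L.xv (j : ℕ)) • vecMulVec (L.uE 0) (L.qEs 0) := by
    rw [Matrix.mul_assoc (L.E 0 * L.tausA (i : ℕ))]
    rw [L.E_decomp 0, L.Es_decomp 0, vmv_mul, mul_vmv, vmv_mul_vmv, ← LeonardSystem.yv,
      ← LeonardSystem.xv]
  have hE0Es0 : L.E 0 * L.Estar 0 = L.βE 0 • vecMulVec (L.uE 0) (L.qEs 0) := by
    rw [L.E_decomp 0, L.Es_decomp 0, vmv_mul_vmv, ← LeonardSystem.βE]
  by_cases hij : i = j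
  · subst hij
    have hd : (i : ℕ) ≤ d := by have := i.isLt; omega
    rw [if_pos rfl, key, hE0Es0, smul_smul, L.yv_xv_diag (i : ℕ) hd]
  · rw [if_neg hij, key]
    rcases Nat.lt_or_ge (i : ℕ) (j : ℕ) with hlt | hge
    · rw [L.yv_xv_lt _ _ hlt, zero_smul]
    · have hne : (i : ℕ) ≠ (j : ℕ) := fun h => hij (Fin.ext h)
      rw [L.yv_xv_gt _ _ (by omega), zero_smul]
end

section
/- Let Φ be a Leonard system. Then tr(E_r E*_0), tr(E_r E*_d), tr(E*_r E_0), tr(E*_r E_d) are all nonzero for 0 ≤ r ≤ d. -/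
open Matrix Polynomial

section TraceAux

variable {K : Type*} [Field K] {n : ℕ}

open Matrix

variable {K : Type*} [Field K] {n : ℕ}

lemma sum_mulVec' {ι : Type*} (s : Finset ι) (M : ι → Matrix (Fin n) (Fin n) K)
    (y : Fin n → K) : (∑ i ∈ s, M i) *ᵥ y = ∑ i ∈ s, M i *ᵥ y := by
  ext a
  simp only [Matrix.mulVec, dotProduct, Finset.sum_apply, Matrix.sum_apply,
    Finset.sum_mul]
  rw [Finset.sum_comm]

lemma vecMulVec_mul_vecMulVec' (p q x y : Fin n → K) :
    vecMulVec p q * vecMulVec x y = (q ⬝ᵥ x) • vecMulVec p y := by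
  ext a b
  simp only [Matrix.mul_apply, Matrix.vecMulVec_apply, Matrix.smul_apply, dotProduct,
    smul_eq_mul, Finset.sum_mul]
  exact Finset.sum_congr rfl fun k _ => by ring

lemma rank_one_of_family (G : Fin (n+1) → Matrix (Fin (n+1)) (Fin (n+1)) K)
    (hmul : ∀ i j, G i * G j = if i = j then G i else 0)
    (hsum : ∑ i, G i = 1) (hne : ∀ i, G i ≠ 0) (r : Fin (n+1)) :
    ∃ u v : Fin (n+1) → K, G r = Matrix.vecMulVec u v ∧ v ⬝ᵥ u = 1 := by
  classical
  set W : Fin (n+1) → Submodule K (Fin (n+1) → K) :=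
    fun i => LinearMap.range (G i).mulVecLin with hW
  have hWne : ∀ i, ∃ y, y ∈ W i ∧ y ≠ 0 := by
    intro i
    have : ∃ a b, G i a b ≠ 0 := by
      by_contra h
      push_neg at h
      exact hne i (by ext a b; simpa using h a b)
    obtain ⟨a, b, hab⟩ := this
    refine ⟨(G i) *ᵥ Pi.single b 1, ⟨Pi.single b 1, rfl⟩, ?_⟩
    intro h
    have := congrFun h a
    simp [Matrix.mulVec_single] at this
    exact hab this
  let φ : (∀ i, W i) →ₗ[K] (Fin (n+1) → K) :=
    { toFun := fun x => ∑ i, (x i : Fin (n+1) → K)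
      map_add' := by intro x y; simp [Finset.sum_add_distrib]
      map_smul' := by intro c x; simp [Finset.smul_sum] }
  have hφinj : Function.Injective φ := by
    rw [← LinearMap.ker_eq_bot, LinearMap.ker_eq_bot']
    intro x hx
    have hx' : ∑ i, (x i : Fin (n+1) → K) = 0 := hx
    have key : ∀ j, (x j : Fin (n+1) → K) = 0 := by
      intro j
      have h1 : (G j) *ᵥ (∑ i, (x i : Fin (n+1) → K)) = 0 := by rw [hx']; simp
      have h2 : ∀ i, (G j) *ᵥ ((x i : Fin (n+1) → K)) =
          if j = i then (x i : Fin (n+1) → K) else 0 := by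
        intro i
        obtain ⟨y, hy⟩ := (x i).2
        rw [← hy]
        show G j *ᵥ ((G i) *ᵥ y) = _
        rw [Matrix.mulVec_mulVec, hmul]
        by_cases h : j = i <;> simp [h]
      rw [show ((G j) *ᵥ (∑ i, (x i : Fin (n+1) → K))) = ∑ i, (G j) *ᵥ (x i : Fin (n+1) → K)
        from map_sum (G j).mulVecLin _ _] at h1
      simp only [h2] at h1
      rwa [Finset.sum_ite_eq, if_pos (Finset.mem_univ j)] at h1
    funext j
    exact Subtype.ext (key j)
  have hφsurj : Function.Surjective φ := by
    intro y
    refine ⟨fun i => ⟨(G i) *ᵥ y, ⟨y, rfl⟩⟩, ?_⟩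
    show ∑ i, (G i) *ᵥ y = y
    rw [← sum_mulVec', hsum]
    simp
  -- finrank computation
  have heq := LinearEquiv.finrank_eq (LinearEquiv.ofBijective φ ⟨hφinj, hφsurj⟩)
  rw [Module.finrank_pi_fintype, Module.finrank_pi] at heq
  have hpos : ∀ i, 1 ≤ Module.finrank K (W i) := by
    intro i
    obtain ⟨y, hy, hy0⟩ := hWne i
    have : (⟨y, hy⟩ : W i) ≠ 0 := fun h => hy0 (congrArg Subtype.val h)
    exact (Module.finrank_pos_iff_exists_ne_zero (R := K)).mpr ⟨_, this⟩
  have hr1 : Module.finrank K (W r) = 1 := by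
    have hsplit : Module.finrank K (W r) +
        ∑ i ∈ Finset.univ.erase r, Module.finrank K (W i) =
        ∑ i, Module.finrank K (W i) :=
      Finset.add_sum_erase Finset.univ (fun i => Module.finrank K (W i)) (Finset.mem_univ r)
    have hge : (Finset.univ.erase r).card ≤ ∑ i ∈ Finset.univ.erase r, Module.finrank K (W i) :=
      Finset.card_nsmul_le_sum _ _ 1 (fun i _ => hpos i) |>.trans_eq' (by simp)
    have hcard : (Finset.univ.erase r).card = n := by
      rw [Finset.card_erase_of_mem (Finset.mem_univ r)]
      simp
    have := hpos r
    rw [Fintype.card_fin] at heq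
    omega
  obtain ⟨u, hu, hu0⟩ := hWne r
  have hspan : Submodule.span K {u} = W r := by
    apply Submodule.eq_of_le_of_finrank_le
    · rwa [Submodule.span_singleton_le_iff_mem]
    · rw [hr1, finrank_span_singleton hu0]
  have hcol : ∀ j, (fun a => G r a j) ∈ W r := fun j =>
    ⟨Pi.single j 1, by show G r *ᵥ Pi.single j 1 = _; simp [Matrix.mulVec_single]; rfl⟩
  choose v hv using fun j => Submodule.mem_span_singleton.mp (hspan ▸ hcol j)
  have hGr : G r = Matrix.vecMulVec u v := by
    ext a b
    rw [Matrix.vecMulVec_apply]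
    have h := congrFun (hv b) a
    simp only [Pi.smul_apply, smul_eq_mul] at h
    rw [← h]; ring
  refine ⟨u, v, hGr, ?_⟩
  have hid : G r * G r = G r := by rw [hmul]; simp
  rw [hGr, vecMulVec_mul_vecMulVec'] at hid
  have hne' : ∃ a b, u a * v b ≠ 0 := by
    by_contra h
    push_neg at h
    exact hne r (by rw [hGr]; ext a b; rw [Matrix.vecMulVec_apply]; exact h a b)
  obtain ⟨a, b, hab⟩ := hne'
  have h2 := congrFun (congrFun hid a) b
  simp only [Matrix.smul_apply, Matrix.vecMulVec_apply, smul_eq_mul] at h2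
  have : (v ⬝ᵥ u) * (u a * v b) = 1 * (u a * v b) := by rw [one_mul]; exact h2
  exact mul_right_cancel₀ hab this

lemma mul_vecMulVec' (P : Matrix (Fin n) (Fin n) K) (u v : Fin n → K) :
    P * vecMulVec u v = vecMulVec (P *ᵥ u) v := by
  ext a b
  simp only [Matrix.mul_apply, Matrix.vecMulVec_apply, Matrix.mulVec, dotProduct,
    Finset.sum_mul]
  exact Finset.sum_congr rfl fun k _ => by ring

lemma vecMulVec_mul' (u v : Fin n → K) (Q : Matrix (Fin n) (Fin n) K) :
    vecMulVec u v * Q = vecMulVec u (v ᵥ* Q) := by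
  ext a b
  simp only [Matrix.mul_apply, Matrix.vecMulVec_apply, Matrix.vecMul, dotProduct,
    Finset.mul_sum]
  exact Finset.sum_congr rfl fun k _ => by ring

lemma vecMulVec_ne_zero_iff {u v : Fin n → K} :
    vecMulVec u v ≠ 0 ↔ (∃ a, u a ≠ 0) ∧ ∃ b, v b ≠ 0 := by
  constructor
  · intro h
    by_contra hc
    push_neg at hc
    apply h
    ext a b
    rw [Matrix.vecMulVec_apply]
    by_cases ha : ∃ a, u a ≠ 0
    · rw [hc ha b, mul_zero]; rfl
    · push_neg at ha
      rw [ha a, zero_mul]; rfl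
  · rintro ⟨⟨a, ha⟩, ⟨b, hb⟩⟩ h
    have := congrFun (congrFun h a) b
    rw [Matrix.vecMulVec_apply] at this
    exact mul_ne_zero ha hb (by simpa using this)

lemma prod_ne_zero {E P Q : Matrix (Fin n) (Fin n) K} {u v : Fin n → K}
    (hE : E = vecMulVec u v) (hP : P * E ≠ 0) (hQ : E * Q ≠ 0) : P * E * Q ≠ 0 := by
  rw [hE, mul_vecMulVec'] at hP ⊢
  rw [hE, vecMulVec_mul'] at hQ
  rw [vecMulVec_mul']
  rw [vecMulVec_ne_zero_iff] at hP hQ ⊢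
  exact ⟨hP.1, hQ.2⟩

lemma trace_aux (G : Fin (n+1) → Matrix (Fin (n+1)) (Fin (n+1)) K)
    (B F : Matrix (Fin (n+1)) (Fin (n+1)) K) (θv : K)
    (hmul : ∀ i j, G i * G j = if i = j then G i else 0)
    (hsum : ∑ i, G i = 1) (hne : ∀ i, G i ≠ 0)
    (h0 : ∀ i j : Fin (n+1), ((i : ℤ) - (j : ℤ)).natAbs > 1 → G i * B * G j = 0)
    (h1 : ∀ i j : Fin (n+1), ((i : ℤ) - (j : ℤ)).natAbs = 1 → G i * B * G j ≠ 0)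
    (hFB : F * B = θv • F) (hBF : B * F = θv • F)
    (p q : Fin (n+1) → K) (hF : F = vecMulVec p q) (hpq : q ⬝ᵥ p = 1) :
    (F * G 0).trace ≠ 0 := by
  classical
  have hFne : F ≠ 0 := by
    rw [hF, vecMulVec_ne_zero_iff]
    constructor
    · by_contra h
      push_neg at h
      exact one_ne_zero (α := K) (by rw [← hpq]; simp [dotProduct, h])
    · by_contra h
      push_neg at h
      exact one_ne_zero (α := K) (by rw [← hpq]; simp [dotProduct, h])
  have claim1 : F * G 0 ≠ 0 := by
    intro hc
    have key : ∀ m : ℕ, ∀ j : ℕ, j ≤ m → ∀ hj : j < n+1, F * G ⟨j, hj⟩ = 0 := by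
      intro m
      induction m with
      | zero =>
        intro j hj hj'
        have hj0 : j = 0 := by omega
        subst hj0
        have h00 : (⟨0, hj'⟩ : Fin (n+1)) = 0 := rfl
        rw [h00]
        exact hc
      | succ m IH =>
        intro j hj hj'
        rcases Nat.lt_or_ge j (m+1) with hlt | hge
        · exact IH j (by omega) hj'
        have hjm : j = m + 1 := by omega
        subst hjm
        have hmlt : m < n + 1 := by omega
        set i : Fin (n+1) := ⟨m, hmlt⟩ with hi
        set kk : Fin (n+1) := ⟨m+1, hj'⟩ with hkk
        have eq1 : θv • (F * G i) = ∑ k, (F * G k) * (G k * B * G i) := by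
          have e1 : F * B * G i = θv • (F * G i) := by
            rw [hFB, smul_mul_assoc]
          have e2 : F * B * G i = ∑ k, (F * G k) * (G k * B * G i) := by
            calc F * B * G i = F * (∑ k, G k) * B * G i := by rw [hsum, mul_one]
              _ = ∑ k, F * G k * B * G i := by
                  rw [Finset.mul_sum, Finset.sum_mul, Finset.sum_mul]
              _ = ∑ k, (F * G k) * (G k * B * G i) := by
                  refine Finset.sum_congr rfl fun k _ => ?_
                  calc F * G k * B * G i
                      = F * (G k * G k) * B * G i := by rw [hmul k k, if_pos rfl]
                    _ = (F * G k) * (G k * B * G i) := by simp only [mul_assoc]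
          rw [← e1, e2]
        have hY0 : F * G i = 0 := IH m le_rfl hmlt
        have eq2 : (F * G kk) * (G kk * B * G i) = 0 := by
          rw [hY0, smul_zero] at eq1
          rw [Finset.sum_eq_single kk ?h1 ?h2] at eq1
          · exact eq1.symm
          case h1 =>
            intro b _ hb
            rcases Nat.lt_or_ge (b : ℕ) (m+1) with hbm | hbm
            · have hb0 : F * G b = 0 := IH b.val (by omega) b.isLt
              rw [hb0, zero_mul]
            · have hbv : (b : ℕ) ≠ m + 1 := fun h => hb (Fin.ext h)
              rw [h0 b i (by simp only [hi]; omega), mul_zero]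
          case h2 =>
            intro h
            exact absurd (Finset.mem_univ kk) h
        by_cases hY : F * G kk = 0
        · exact hY
        · exfalso
          obtain ⟨u, v, huv, -⟩ := rank_one_of_family G hmul hsum hne kk
          have hEQ : G kk * (B * G i) ≠ 0 := by
            have := h1 kk i (by simp only [hkk, hi]; omega)
            rwa [mul_assoc] at this
          refine prod_ne_zero huv hY hEQ ?_
          calc F * G kk * (B * G i)
              = F * (G kk * G kk) * (B * G i) := by rw [hmul kk kk, if_pos rfl]
            _ = (F * G kk) * (G kk * B * G i) := by simp only [mul_assoc]
            _ = 0 := eq2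
    apply hFne
    calc F = F * (∑ k, G k) := by rw [hsum, mul_one]
      _ = ∑ k, F * G k := by rw [Finset.mul_sum]
      _ = 0 := Finset.sum_eq_zero fun k _ => key k.val k.val le_rfl k.isLt
  have claim2 : G 0 * F ≠ 0 := by
    intro hc
    have key : ∀ m : ℕ, ∀ j : ℕ, j ≤ m → ∀ hj : j < n+1, G ⟨j, hj⟩ * F = 0 := by
      intro m
      induction m with
      | zero =>
        intro j hj hj'
        have hj0 : j = 0 := by omega
        subst hj0
        have h00 : (⟨0, hj'⟩ : Fin (n+1)) = 0 := rfl
        rw [h00]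
        exact hc
      | succ m IH =>
        intro j hj hj'
        rcases Nat.lt_or_ge j (m+1) with hlt | hge
        · exact IH j (by omega) hj'
        have hjm : j = m + 1 := by omega
        subst hjm
        have hmlt : m < n + 1 := by omega
        set i : Fin (n+1) := ⟨m, hmlt⟩ with hi
        set kk : Fin (n+1) := ⟨m+1, hj'⟩ with hkk
        have eq1 : θv • (G i * F) = ∑ k, (G i * B * G k) * (G k * F) := by
          have e1 : G i * B * F = θv • (G i * F) := by
            rw [mul_assoc, hBF, Matrix.mul_smul]
          have e2 : G i * B * F = ∑ k, (G i * B * G k) * (G k * F) := by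
            calc G i * B * F = G i * B * (∑ k, G k) * F := by rw [hsum, mul_one]
              _ = ∑ k, G i * B * G k * F := by
                  rw [Finset.mul_sum, Finset.sum_mul]
              _ = ∑ k, (G i * B * G k) * (G k * F) := by
                  refine Finset.sum_congr rfl fun k _ => ?_
                  calc G i * B * G k * F
                      = G i * B * (G k * G k) * F := by rw [hmul k k, if_pos rfl]
                    _ = (G i * B * G k) * (G k * F) := by simp only [mul_assoc]
          rw [← e1, e2]
        have hY0 : G i * F = 0 := IH m le_rfl hmlt
        have eq2 : (G i * B * G kk) * (G kk * F) = 0 := by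
          rw [hY0, smul_zero] at eq1
          rw [Finset.sum_eq_single kk ?h1 ?h2] at eq1
          · exact eq1.symm
          case h1 =>
            intro b _ hb
            rcases Nat.lt_or_ge (b : ℕ) (m+1) with hbm | hbm
            · have hb0 : G b * F = 0 := IH b.val (by omega) b.isLt
              rw [hb0, mul_zero]
            · have hbv : (b : ℕ) ≠ m + 1 := fun h => hb (Fin.ext h)
              rw [h0 i b (by simp only [hi]; omega), zero_mul]
          case h2 =>
            intro h
            exact absurd (Finset.mem_univ kk) h
        by_cases hY : G kk * F = 0
        · exact hY
        · exfalso
          obtain ⟨u, v, huv, -⟩ := rank_one_of_family G hmul hsum hne kk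
          have hPE : (G i * B) * G kk ≠ 0 :=
            h1 i kk (by simp only [hkk, hi]; omega)
          refine prod_ne_zero huv hPE hY ?_
          calc G i * B * G kk * F
              = G i * B * (G kk * G kk) * F := by rw [hmul kk kk, if_pos rfl]
            _ = (G i * B * G kk) * (G kk * F) := by simp only [mul_assoc]
            _ = 0 := eq2
    apply hFne
    calc F = (∑ k, G k) * F := by rw [hsum, one_mul]
      _ = ∑ k, G k * F := by rw [Finset.sum_mul]
      _ = 0 := Finset.sum_eq_zero fun k _ => key k.val k.val le_rfl k.isLt
  obtain ⟨u, v, huv, hvu⟩ := rank_one_of_family G hmul hsum hne 0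
  rw [hF, huv, vecMulVec_mul_vecMulVec'] at claim1 ⊢
  rw [hF, huv, vecMulVec_mul_vecMulVec'] at claim2
  have h1' : q ⬝ᵥ u ≠ 0 := fun h => claim1 (by rw [h, zero_smul])
  have h2' : v ⬝ᵥ p ≠ 0 := fun h => claim2 (by rw [h, zero_smul])
  rw [Matrix.trace_smul, smul_eq_mul]
  have htr : (vecMulVec p v).trace = p ⬝ᵥ v := by
    simp [Matrix.trace, Matrix.diag, Matrix.vecMulVec_apply, dotProduct]
  rw [htr]
  exact mul_ne_zero h1' (by rwa [dotProduct_comm] at h2')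

end TraceAux

/-- The traces `tr(E_rE*_0)`, `tr(E_rE*_d)`, `tr(E*_rE_0)`, `tr(E*_rE_d)` are nonzero. -/
theorem LeonardSystem.trace_ne_zero {K : Type*} [Field K] {d : ℕ}
    (L : LeonardSystem K d) :
    ∀ r : Fin (d+1),
      (L.E r * L.Estar 0).trace ≠ 0 ∧
      (L.E r * L.Estar (Fin.last d)).trace ≠ 0 ∧
      (L.Estar r * L.E 0).trace ≠ 0 ∧
      (L.Estar r * L.E (Fin.last d)).trace ≠ 0 := by
  classical
  have hE_FB : ∀ s : Fin (d+1), L.E s * L.A = L.θ s • L.E s := by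
    intro s
    rw [L.A_eq, Finset.mul_sum]
    have h : ∀ i, L.E s * (L.θ i • L.E i) = if s = i then L.θ i • L.E s else 0 := by
      intro i
      rw [Matrix.mul_smul, L.E_mul]
      by_cases h : s = i <;> simp [h]
    simp only [h]
    rw [Finset.sum_ite_eq, if_pos (Finset.mem_univ s)]
  have hE_BF : ∀ s : Fin (d+1), L.A * L.E s = L.θ s • L.E s := by
    intro s
    rw [L.A_eq, Finset.sum_mul]
    have h : ∀ i, (L.θ i • L.E i) * L.E s = if i = s then L.θ i • L.E s else 0 := by
      intro i
      rw [smul_mul_assoc, L.E_mul]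
      by_cases h : i = s <;> simp [h]
    simp only [h]
    rw [Finset.sum_ite_eq', if_pos (Finset.mem_univ s)]
  have hEs_FB : ∀ s : Fin (d+1), L.Estar s * L.Astar = L.θs s • L.Estar s := by
    intro s
    rw [L.As_eq, Finset.mul_sum]
    have h : ∀ i, L.Estar s * (L.θs i • L.Estar i) = if s = i then L.θs i • L.Estar s else 0 := by
      intro i
      rw [Matrix.mul_smul, L.Es_mul]
      by_cases h : s = i <;> simp [h]
    simp only [h]
    rw [Finset.sum_ite_eq, if_pos (Finset.mem_univ s)]
  have hEs_BF : ∀ s : Fin (d+1), L.Astar * L.Estar s = L.θs s • L.Estar s := by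
    intro s
    rw [L.As_eq, Finset.sum_mul]
    have h : ∀ i, (L.θs i • L.Estar i) * L.Estar s = if i = s then L.θs i • L.Estar s else 0 := by
      intro i
      rw [smul_mul_assoc, L.Es_mul]
      by_cases h : i = s <;> simp [h]
    simp only [h]
    rw [Finset.sum_ite_eq', if_pos (Finset.mem_univ s)]
  have hrev : ∀ i j : Fin (d+1),
      (((Fin.rev i : Fin (d+1)) : ℤ) - ((Fin.rev j : Fin (d+1)) : ℤ)).natAbs
        = ((i : ℤ) - (j : ℤ)).natAbs := by
    intro i j
    have h1 := i.isLt
    have h2 := j.isLt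
    simp only [Fin.val_rev]
    omega
  have hrev0 : Fin.rev (0 : Fin (d+1)) = Fin.last d := by
    ext
    simp [Fin.val_rev]
  intro r
  obtain ⟨p, q, hp, hpq⟩ := rank_one_of_family L.E L.E_mul L.E_sum L.E_ne r
  obtain ⟨ps, qs, hps, hpqs⟩ := rank_one_of_family L.Estar L.Es_mul L.Es_sum L.Es_ne r
  refine ⟨?_, ?_, ?_, ?_⟩
  · exact trace_aux L.Estar L.A (L.E r) (L.θ r) L.Es_mul L.Es_sum L.Es_ne L.strid0 L.strid1
      (hE_FB r) (hE_BF r) p q hp hpq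
  · have h := trace_aux (fun i => L.Estar (Fin.rev i)) L.A (L.E r) (L.θ r)
      (by intro i j; simp only [L.Es_mul, Fin.rev_inj])
      (by rw [← L.Es_sum]; exact Fintype.sum_equiv Fin.revPerm _ _ fun i => rfl)
      (fun i => L.Es_ne _)
      (fun i j hij => L.strid0 _ _ (by rw [hrev]; exact hij))
      (fun i j hij => L.strid1 _ _ (by rw [hrev]; exact hij))
      (hE_FB r) (hE_BF r) p q hp hpq
    simp only [hrev0] at h
    exact h
  · exact trace_aux L.E L.Astar (L.Estar r) (L.θs r) L.E_mul L.E_sum L.E_ne L.trid0 L.trid1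
      (hEs_FB r) (hEs_BF r) ps qs hps hpqs
  · have h := trace_aux (fun i => L.E (Fin.rev i)) L.Astar (L.Estar r) (L.θs r)
      (by intro i j; simp only [L.E_mul, Fin.rev_inj])
      (by rw [← L.E_sum]; exact Fintype.sum_equiv Fin.revPerm _ _ fun i => rfl)
      (fun i => L.E_ne _)
      (fun i j hij => L.trid0 _ _ (by rw [hrev]; exact hij))
      (fun i j hij => L.trid1 _ _ (by rw [hrev]; exact hij))
      (hEs_FB r) (hEs_BF r) ps qs hps hpqs
    simp only [hrev0] at h
    exact h
end
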